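/- arXiv:2505.10024 — 5 statements merged into one kernel-verified Lean document; each statement's English description precedes it below -/
import Mathlib

section
/- Fix n ≥ 1, a label y ∈ {−1, +1}, w ∈ ℝⁿ, b ∈ ℝ and ξ ≥ 0. Let μ ∈ ℝⁿ, let Σ ∈ ℝ^{n×n} be symmetric positive definite, let γ₁, γ₂ ≥ 0, let Y_1,…,Y_m ⊆ ℝⁿ be core sets with exponents p_j and weights θ_j > 0, and let D be the associated ambiguity set. Suppose Λ ∈ ℝ^{n×n} is symmetric positive semidefinite, q ∈ ℝⁿ, t ∈ ℝ and r ≥ 0 satisfy, for every x ∈ ℝⁿ, the pointwise majorization 𝟙[y(wᵀx + b) ≤ 1 − ξ] ≤ xᵀΛx + qᵀx + t + r · min_{1≤j≤m} θ_j min_{x'∈Y_j} ‖x − x'‖_{p_j}. Then for every F ∈ D, F({x ∈ ℝⁿ : y(wᵀx + b) ≤ 1 − ξ}) ≤ t + tr(Λ(γ₂Σ + μμᵀ)) + √γ₁ ‖Σ^{1/2}(q + 2Λμ)‖₂ + qᵀμ + r. -/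
open Matrix MeasureTheory ENNReal

noncomputable section

/-- The `p`-norm on `ι → ℝ` for an extended-real exponent `p ∈ [1,∞]`. -/
def pNormE {ι : Type*} [Fintype ι] (p : ℝ≥0∞) (x : ι → ℝ) : ℝ :=
  if p = ∞ then ⨆ i, |x i| else (∑ i, |x i| ^ p.toReal) ^ (1 / p.toReal)

/-- A core set `{x̂ + Aζ : ‖ζ‖_p ≤ √γ̄}`. -/
def coreSetE {n : ℕ} (xhat : Fin n → ℝ) (A : Matrix (Fin n) (Fin n) ℝ)
    (γbar : ℝ) (p : ℝ≥0∞) : Set (Fin n → ℝ) :=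
  {x | ∃ ζ : Fin n → ℝ, pNormE p ζ ≤ Real.sqrt γbar ∧ x = xhat + A.mulVec ζ}

/-- The `p`-distance `min_{x'∈Y} ‖x − x'‖_p` from `x` to a set `Y`. -/
def distToSet {n : ℕ} (p : ℝ≥0∞) (Y : Set (Fin n → ℝ)) (x : Fin n → ℝ) : ℝ :=
  sInf ((fun x' => pNormE p (x - x')) '' Y)

/-- The core-set penalty `min_{1≤j≤m} θ_j min_{x'∈Y_j} ‖x − x'‖_{p_j}`. -/
def corePenalty {n m : ℕ} (θ : Fin m → ℝ) (p : Fin m → ℝ≥0∞)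
    (Y : Fin m → Set (Fin n → ℝ)) (x : Fin n → ℝ) : ℝ :=
  ⨅ j, θ j * distToSet (p j) (Y j) x

/-- The positive semidefinite square root of a positive semidefinite matrix, spelled out as
`Matrix.PosSemidef.sqrt` was defined in the older Mathlib. -/
def psdSqrtE {n : Type*} [Fintype n] [DecidableEq n] {A : Matrix n n ℝ} (hA : A.PosSemidef) :
    Matrix n n ℝ :=
  hA.1.eigenvectorUnitary.1 * diagonal ((↑) ∘ (√·) ∘ hA.1.eigenvalues) *
    (star hA.1.eigenvectorUnitary : Matrix n n ℝ)

/-- Membership in the moment- and core-set-based ambiguity set `D`: `F` is a Borel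
probability measure with finite second moments whose mean lies in the
`γ₁`-confidence ellipsoid around `μ`, whose centered second moment is dominated by
`γ₂Σ`, and whose expected core-set penalty is at most `1`. -/
def memAmb {n m : ℕ} (μ : Fin n → ℝ) (Sig : Matrix (Fin n) (Fin n) ℝ)
    (γ1 γ2 : ℝ) (θ : Fin m → ℝ) (p : Fin m → ℝ≥0∞)
    (Y : Fin m → Set (Fin n → ℝ)) (F : Measure (Fin n → ℝ)) : Prop :=
  IsProbabilityMeasure F ∧
  (∀ i, Integrable (fun x => x i) F) ∧
  (∀ i j, Integrable (fun x => x i * x j) F) ∧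
  ((fun i => ∫ x, x i ∂F) - μ) ⬝ᵥ Sig⁻¹.mulVec ((fun i => ∫ x, x i ∂F) - μ) ≤ γ1 ∧
  (γ2 • Sig - Matrix.of fun i j => ∫ x, (x i - μ i) * (x j - μ j) ∂F).PosSemidef ∧
  ∫⁻ x, ENNReal.ofReal (corePenalty θ p Y x) ∂F ≤ 1

private lemma psdSqrtE_mul_self {k : ℕ} {A : Matrix (Fin k) (Fin k) ℝ} (hA : A.PosSemidef) :
    psdSqrtE hA * psdSqrtE hA = A := by
  have hU : (star hA.1.eigenvectorUnitary : Matrix (Fin k) (Fin k) ℝ) *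
      hA.1.eigenvectorUnitary.1 = 1 := Unitary.coe_star_mul_self _
  have hD : diagonal ((↑) ∘ (√·) ∘ hA.1.eigenvalues) *
      diagonal ((↑) ∘ (√·) ∘ hA.1.eigenvalues)
      = diagonal (RCLike.ofReal ∘ hA.1.eigenvalues : Fin k → ℝ) := by
    rw [diagonal_mul_diagonal]; congr 1; funext i
    simp [Real.mul_self_sqrt (hA.eigenvalues_nonneg i)]
  unfold psdSqrtE
  conv_rhs => rw [hA.1.spectral_theorem, Unitary.conjStarAlgAut_apply]
  calc _ = hA.1.eigenvectorUnitary.1 * (diagonal ((↑) ∘ (√·) ∘ hA.1.eigenvalues) *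
        ((star hA.1.eigenvectorUnitary : Matrix (Fin k) (Fin k) ℝ) *
        hA.1.eigenvectorUnitary.1) * diagonal ((↑) ∘ (√·) ∘ hA.1.eigenvalues)) *
        (star hA.1.eigenvectorUnitary : Matrix (Fin k) (Fin k) ℝ) := by
        simp only [Matrix.mul_assoc]
    _ = _ := by rw [hU, Matrix.mul_one, hD]

private lemma psdSqrtE_isHermitian {k : ℕ} {A : Matrix (Fin k) (Fin k) ℝ}
    (hA : A.PosSemidef) : (psdSqrtE hA).IsHermitian := by
  unfold psdSqrtE Matrix.IsHermitian
  simp [Matrix.conjTranspose_mul, Matrix.mul_assoc, Unitary.coe_star, Matrix.star_eq_conjTranspose]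

private lemma pNormE_nonneg' {ι : Type*} [Fintype ι] (p : ℝ≥0∞) (x : ι → ℝ) :
    0 ≤ pNormE p x := by
  unfold pNormE
  split
  · exact Real.iSup_nonneg fun i => abs_nonneg _
  · exact Real.rpow_nonneg (Finset.sum_nonneg fun i _ => Real.rpow_nonneg (abs_nonneg _) _) _

private lemma corePenalty_nonneg' {n m : ℕ} (hm : 1 ≤ m) {θ : Fin m → ℝ} (hθ : ∀ j, 0 < θ j)
    (p : Fin m → ℝ≥0∞) (Y : Fin m → Set (Fin n → ℝ)) (x : Fin n → ℝ) :
    0 ≤ corePenalty θ p Y x := by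
  have : Nonempty (Fin m) := ⟨⟨0, hm⟩⟩
  refine le_ciInf fun j => mul_nonneg (hθ j).le ?_
  refine Real.sInf_nonneg ?_
  rintro a ⟨x', -, rfl⟩
  exact pNormE_nonneg' _ _

private lemma ofReal_int_le {α : Type*} [MeasurableSpace α]
    {μ : Measure α} {f : α → ℝ} (hfi : Integrable f μ) :
    ENNReal.ofReal (∫ x, f x ∂μ) ≤ ∫⁻ x, ENNReal.ofReal (f x) ∂μ := by
  have hpos : Integrable (fun x => max (f x) 0) μ := hfi.pos_part
  have h1 : ∫ x, f x ∂μ ≤ ∫ x, max (f x) 0 ∂μ :=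
    integral_mono hfi hpos fun x => le_max_left _ _
  have h2 : ENNReal.ofReal (∫ x, max (f x) 0 ∂μ) = ∫⁻ x, ENNReal.ofReal (max (f x) 0) ∂μ :=
    ofReal_integral_eq_lintegral_ofReal hpos
      (Filter.Eventually.of_forall fun x => le_max_right _ _)
  calc ENNReal.ofReal (∫ x, f x ∂μ) ≤ ENNReal.ofReal (∫ x, max (f x) 0 ∂μ) :=
        ENNReal.ofReal_le_ofReal h1
    _ = ∫⁻ x, ENNReal.ofReal (max (f x) 0) ∂μ := h2
    _ = ∫⁻ x, ENNReal.ofReal (f x) ∂μ := by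
        refine lintegral_congr fun x => ?_
        rcases le_total 0 (f x) with h | h
        · rw [max_eq_left h]
        · rw [max_eq_right h, ENNReal.ofReal_of_nonpos h, ENNReal.ofReal_zero]

private lemma psd_diag_nonneg {k : ℕ} {M : Matrix (Fin k) (Fin k) ℝ} (hM : M.PosSemidef)
    (i : Fin k) : 0 ≤ M i i := by
  exact hM.diag_nonneg

private lemma psd_trace_nonneg {k : ℕ} {M : Matrix (Fin k) (Fin k) ℝ} (hM : M.PosSemidef) :
    0 ≤ M.trace :=
  Finset.sum_nonneg fun i _ => psd_diag_nonneg hM i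

private lemma trace_mul_psd_nonneg {k : ℕ} {Λ D : Matrix (Fin k) (Fin k) ℝ}
    (hΛ : Λ.PosSemidef) (hD : D.PosSemidef) : 0 ≤ (Λ * D).trace := by
  have hS : psdSqrtE hΛ * psdSqrtE hΛ = Λ := psdSqrtE_mul_self hΛ
  have h1 : (Λ * D).trace = (psdSqrtE hΛ * D * psdSqrtE hΛ).trace := by
    have := congrArg (fun X => (X * D).trace) hS
    rw [← this, Matrix.mul_assoc, Matrix.trace_mul_comm, Matrix.mul_assoc]
  have h2 : (psdSqrtE hΛ * D * (psdSqrtE hΛ)ᴴ).PosSemidef :=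
    hD.mul_mul_conjTranspose_same (psdSqrtE hΛ)
  have h3 : (psdSqrtE hΛ)ᴴ = psdSqrtE hΛ := psdSqrtE_isHermitian hΛ
  rw [h1]
  rw [h3] at h2
  exact psd_trace_nonneg h2

private lemma pNormE_two_eq {k : ℕ} (u : Fin k → ℝ) :
    pNormE 2 u = Real.sqrt (∑ i, u i ^ 2) := by
  unfold pNormE
  rw [if_neg (by norm_num)]
  have h2 : ((2 : ℝ≥0∞)).toReal = (2 : ℝ) := by norm_num
  rw [h2]
  have : ∀ i : Fin k, |u i| ^ (2 : ℝ) = u i ^ 2 := fun i => by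
    rw [show (2:ℝ) = ((2:ℕ):ℝ) by norm_num, Real.rpow_natCast, sq_abs]
  simp_rw [this]
  rw [Real.sqrt_eq_rpow]

private lemma cs_bound {k : ℕ} {Sig : Matrix (Fin k) (Fin k) ℝ} (hSig : Sig.PosDef)
    {γ1 : ℝ} (hγ1 : 0 ≤ γ1) (d v : Fin k → ℝ)
    (hd : d ⬝ᵥ Sig⁻¹.mulVec d ≤ γ1) :
    v ⬝ᵥ d ≤ Real.sqrt γ1 * pNormE 2 ((psdSqrtE hSig.posSemidef).mulVec v) := by
  set S := psdSqrtE hSig.posSemidef with hSdef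
  have hSS : S * S = Sig := psdSqrtE_mul_self hSig.posSemidef
  have hHerm : Sᵀ = S := by
    have := psdSqrtE_isHermitian hSig.posSemidef
    rwa [Matrix.IsHermitian, Matrix.conjTranspose_eq_transpose_of_trivial] at this
  have hdet : IsUnit S.det := by
    have : IsUnit (S.det * S.det) := by
      rw [← Matrix.det_mul, hSS]; exact hSig.det_pos.ne'.isUnit
    exact isUnit_of_mul_isUnit_left this
  have hinv : S * S⁻¹ = 1 := Matrix.mul_nonsing_inv S hdet
  set u := S.mulVec v with hu
  set e := S⁻¹.mulVec d with he
  have key : v ⬝ᵥ d = u ⬝ᵥ e := by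
    have : d = S.mulVec e := by
      rw [he, Matrix.mulVec_mulVec, hinv, Matrix.one_mulVec]
    rw [this, Matrix.dotProduct_mulVec, hu, ← Matrix.mulVec_transpose, hHerm]
  have hee : e ⬝ᵥ e = d ⬝ᵥ Sig⁻¹.mulVec d := by
    rw [he, Matrix.dotProduct_mulVec (S⁻¹.mulVec d) S⁻¹ d]
    rw [← Matrix.mulVec_transpose, Matrix.transpose_nonsing_inv, hHerm,
      Matrix.mulVec_mulVec, ← Matrix.mul_inv_rev, hSS]
    exact dotProduct_comm _ _
  have hcs : (u ⬝ᵥ e) ^ 2 ≤ (∑ i, u i ^ 2) * (∑ i, e i ^ 2) := by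
    simpa [dotProduct] using Finset.sum_mul_sq_le_sq_mul_sq Finset.univ u e
  have hu2 : 0 ≤ ∑ i, u i ^ 2 := Finset.sum_nonneg fun i _ => sq_nonneg _
  have he2 : ∑ i, e i ^ 2 ≤ γ1 := by
    have h : e ⬝ᵥ e = ∑ i, e i ^ 2 := by simp [dotProduct, sq]
    rw [← h, hee]; exact hd
  calc v ⬝ᵥ d = u ⬝ᵥ e := key
    _ ≤ Real.sqrt ((u ⬝ᵥ e) ^ 2) := by rw [Real.sqrt_sq_eq_abs]; exact le_abs_self _
    _ ≤ Real.sqrt ((∑ i, u i ^ 2) * (∑ i, e i ^ 2)) := Real.sqrt_le_sqrt hcs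
    _ ≤ Real.sqrt ((∑ i, u i ^ 2) * γ1) := Real.sqrt_le_sqrt (mul_le_mul_of_nonneg_left he2 hu2)
    _ = Real.sqrt γ1 * pNormE 2 u := by
        rw [mul_comm, Real.sqrt_mul hγ1, pNormE_two_eq]

/-- If `Λ ⪰ 0`, `q`, `t`, `r ≥ 0` pointwise majorize the indicator:
`𝟙[y(wᵀx+b) ≤ 1−ξ] ≤ xᵀΛx + qᵀx + t + r·min_j θ_j min_{x'∈Y_j}‖x − x'‖_{p_j}` for all
`x`, then every `F` in the ambiguity set `D` satisfies
`F({x : y(wᵀx+b) ≤ 1−ξ}) ≤ t + tr(Λ(γ₂Σ + μμᵀ)) + √γ₁‖Σ^{1/2}(q + 2Λμ)‖₂ + qᵀμ + r`. -/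
theorem chance_bound_from_majorization {n m : ℕ} (hn : 1 ≤ n) (hm : 1 ≤ m)
    (y : ℝ) (hy : y = 1 ∨ y = -1) (w : Fin n → ℝ) (b ξ : ℝ) (hξ : 0 ≤ ξ)
    (μ : Fin n → ℝ) (Sig : Matrix (Fin n) (Fin n) ℝ) (hSig : Sig.PosDef)
    (γ1 γ2 : ℝ) (hγ1 : 0 ≤ γ1) (hγ2 : 0 ≤ γ2)
    (xhat : Fin m → Fin n → ℝ) (A : Fin m → Matrix (Fin n) (Fin n) ℝ)
    (γbar : Fin m → ℝ) (hγbar : ∀ j, 0 < γbar j)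
    (p : Fin m → ℝ≥0∞) (hp : ∀ j, 1 ≤ p j)
    (θ : Fin m → ℝ) (hθ : ∀ j, 0 < θ j)
    (Λ : Matrix (Fin n) (Fin n) ℝ) (hΛ : Λ.PosSemidef)
    (q : Fin n → ℝ) (t r : ℝ) (hr : 0 ≤ r)
    (hmaj : ∀ x : Fin n → ℝ,
      (if y * (w ⬝ᵥ x + b) ≤ 1 - ξ then (1 : ℝ) else 0) ≤
        x ⬝ᵥ Λ.mulVec x + q ⬝ᵥ x + t
          + r * corePenalty θ p (fun j => coreSetE (xhat j) (A j) (γbar j) (p j)) x) :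
    ∀ F : Measure (Fin n → ℝ),
      memAmb μ Sig γ1 γ2 θ p (fun j => coreSetE (xhat j) (A j) (γbar j) (p j)) F →
      (F {x | y * (w ⬝ᵥ x + b) ≤ 1 - ξ}).toReal ≤
        t + (Λ * (γ2 • Sig + Matrix.vecMulVec μ μ)).trace
          + Real.sqrt γ1 * pNormE 2 ((psdSqrtE hSig.posSemidef).mulVec (q + (2 : ℝ) • Λ.mulVec μ))
          + q ⬝ᵥ μ + r := by
  intro F hF
  obtain ⟨hprob, hI1, hI2, hmean, hcov, hpen⟩ := hF
  classical
  haveI := hprob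
  -- measurability of the event
  have hcont : Continuous fun x : Fin n → ℝ => y * (w ⬝ᵥ x + b) := by
    refine continuous_const.mul (Continuous.add ?_ continuous_const)
    show Continuous fun x : Fin n → ℝ => ∑ i, w i * x i
    exact continuous_finset_sum _ fun i _ => continuous_const.mul (continuous_apply i)
  have hSmeas : MeasurableSet {x : Fin n → ℝ | y * (w ⬝ᵥ x + b) ≤ 1 - ξ} :=
    measurableSet_le hcont.measurable measurable_const
  -- the indicator
  have hind_eq : (fun x : Fin n → ℝ => if y * (w ⬝ᵥ x + b) ≤ 1 - ξ then (1:ℝ) else 0)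
      = Set.indicator {x : Fin n → ℝ | y * (w ⬝ᵥ x + b) ≤ 1 - ξ} (fun _ => (1:ℝ)) := by
    funext x
    rw [Set.indicator_apply]
    simp only [Set.mem_setOf_eq]
  have hind_int : Integrable
      (fun x : Fin n → ℝ => if y * (w ⬝ᵥ x + b) ≤ 1 - ξ then (1:ℝ) else 0) F := by
    rw [hind_eq]; exact (integrable_const 1).indicator hSmeas
  have hind_val : ∫ x, (if y * (w ⬝ᵥ x + b) ≤ 1 - ξ then (1:ℝ) else 0) ∂F
      = (F {x | y * (w ⬝ᵥ x + b) ≤ 1 - ξ}).toReal := by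
    rw [hind_eq]
    exact integral_indicator_one hSmeas
  -- quadratic and linear integrability
  have hquad_eq : (fun x : Fin n → ℝ => x ⬝ᵥ Λ.mulVec x)
      = fun x => ∑ i, ∑ j, Λ i j * (x i * x j) := by
    funext x
    simp only [dotProduct, Matrix.mulVec, Finset.mul_sum]
    exact Finset.sum_congr rfl fun i _ => Finset.sum_congr rfl fun j _ => by ring
  have hproj : ∀ i j, Integrable (fun x : Fin n → ℝ => Λ i j * (x i * x j)) F :=
    fun i j => (hI2 i j).const_mul _
  have hquad_int : Integrable (fun x : Fin n → ℝ => x ⬝ᵥ Λ.mulVec x) F := by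
    rw [hquad_eq]
    exact integrable_finset_sum _ fun i _ => integrable_finset_sum _ fun j _ => hproj i j
  have hlin_eq : (fun x : Fin n → ℝ => q ⬝ᵥ x) = fun x => ∑ i, q i * x i := rfl
  have hlin_int : Integrable (fun x : Fin n → ℝ => q ⬝ᵥ x) F := by
    rw [hlin_eq]
    exact integrable_finset_sum _ fun i _ => (hI1 i).const_mul _
  have hg_int : Integrable (fun x : Fin n → ℝ => x ⬝ᵥ Λ.mulVec x + q ⬝ᵥ x + t) F :=
    (hquad_int.add hlin_int).add (integrable_const t)
  -- Step A : (F S).toReal ≤ ∫ g + r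
  have hpen_nn : ∀ x : Fin n → ℝ,
      0 ≤ corePenalty θ p (fun j => coreSetE (xhat j) (A j) (γbar j) (p j)) x :=
    corePenalty_nonneg' hm hθ _ _
  have hstepA : (F {x | y * (w ⬝ᵥ x + b) ≤ 1 - ξ}).toReal
      ≤ (∫ x, (x ⬝ᵥ Λ.mulVec x + q ⬝ᵥ x + t) ∂F) + r := by
    have hsub : Integrable (fun x : Fin n → ℝ =>
        (if y * (w ⬝ᵥ x + b) ≤ 1 - ξ then (1:ℝ) else 0)
          - (x ⬝ᵥ Λ.mulVec x + q ⬝ᵥ x + t)) F := hind_int.sub hg_int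
    have h1 : ENNReal.ofReal (∫ x, ((if y * (w ⬝ᵥ x + b) ≤ 1 - ξ then (1:ℝ) else 0)
          - (x ⬝ᵥ Λ.mulVec x + q ⬝ᵥ x + t)) ∂F) ≤ ENNReal.ofReal r := by
      calc ENNReal.ofReal (∫ x, ((if y * (w ⬝ᵥ x + b) ≤ 1 - ξ then (1:ℝ) else 0)
            - (x ⬝ᵥ Λ.mulVec x + q ⬝ᵥ x + t)) ∂F)
          ≤ ∫⁻ x, ENNReal.ofReal ((if y * (w ⬝ᵥ x + b) ≤ 1 - ξ then (1:ℝ) else 0)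
            - (x ⬝ᵥ Λ.mulVec x + q ⬝ᵥ x + t)) ∂F := ofReal_int_le hsub
        _ ≤ ∫⁻ x, ENNReal.ofReal (r * corePenalty θ p
              (fun j => coreSetE (xhat j) (A j) (γbar j) (p j)) x) ∂F := by
            refine lintegral_mono fun x => ENNReal.ofReal_le_ofReal ?_
            have := hmaj x
            linarith
        _ = ∫⁻ x, ENNReal.ofReal r * ENNReal.ofReal (corePenalty θ p
              (fun j => coreSetE (xhat j) (A j) (γbar j) (p j)) x) ∂F :=
            lintegral_congr fun x => ENNReal.ofReal_mul hr
        _ = ENNReal.ofReal r * ∫⁻ x, ENNReal.ofReal (corePenalty θ p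
              (fun j => coreSetE (xhat j) (A j) (γbar j) (p j)) x) ∂F :=
            lintegral_const_mul' _ _ ENNReal.ofReal_ne_top
        _ ≤ ENNReal.ofReal r * 1 := mul_le_mul' le_rfl hpen
        _ = ENNReal.ofReal r := mul_one _
    have h2 : ∫ x, ((if y * (w ⬝ᵥ x + b) ≤ 1 - ξ then (1:ℝ) else 0)
          - (x ⬝ᵥ Λ.mulVec x + q ⬝ᵥ x + t)) ∂F ≤ r :=
      (ENNReal.ofReal_le_ofReal_iff hr).mp h1
    rw [integral_sub hind_int hg_int, hind_val] at h2
    linarith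
  -- moments
  have hC_int : ∀ i j, Integrable (fun x : Fin n → ℝ => (x i - μ i) * (x j - μ j)) F := by
    intro i j
    have h : (fun x : Fin n → ℝ => (x i - μ i) * (x j - μ j))
        = fun x => x i * x j - μ j * x i - μ i * x j + μ i * μ j := funext fun x => by ring
    rw [h]
    exact (((hI2 i j).sub ((hI1 i).const_mul (μ j))).sub ((hI1 j).const_mul (μ i))).add
      (integrable_const _)
  have hmom : ∀ i j, ∫ x, x i * x j ∂F
      = (∫ x, (x i - μ i) * (x j - μ j) ∂F)
        + μ j * (∫ x, x i ∂F) + μ i * (∫ x, x j ∂F) - μ i * μ j := by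
    intro i j
    have h : (fun x : Fin n → ℝ => x i * x j)
        = fun x => ((x i - μ i) * (x j - μ j) + μ j * x i + μ i * x j) - μ i * μ j :=
      funext fun x => by ring
    have hint2 : Integrable (fun x : Fin n → ℝ => (x i - μ i) * (x j - μ j) + μ j * x i) F :=
      (hC_int i j).add ((hI1 i).const_mul (μ j))
    have hint1 : Integrable
        (fun x : Fin n → ℝ => (x i - μ i) * (x j - μ j) + μ j * x i + μ i * x j) F :=
      hint2.add ((hI1 j).const_mul (μ i))
    rw [h, integral_sub hint1 (integrable_const _),
      integral_add hint2 ((hI1 j).const_mul (μ i)),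
      integral_add (hC_int i j) ((hI1 i).const_mul (μ j)),
      integral_const_mul, integral_const_mul, integral_const]
    simp [measure_univ]
    try ring
  -- value of the quadratic integral
  have hquad_val : ∫ x, x ⬝ᵥ Λ.mulVec x ∂F = ∑ i, ∑ j, Λ i j * (∫ x, x i * x j ∂F) := by
    rw [hquad_eq, integral_finset_sum _
      (fun i _ => integrable_finset_sum _ fun j _ => hproj i j)]
    refine Finset.sum_congr rfl fun i _ => ?_
    rw [integral_finset_sum _ fun j _ => hproj i j]
    exact Finset.sum_congr rfl fun j _ => integral_const_mul _ _
  have hlin_val : ∫ x, q ⬝ᵥ x ∂F = ∑ i, q i * (∫ x, x i ∂F) := by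
    rw [hlin_eq, integral_finset_sum _ fun i _ => (hI1 i).const_mul _]
    exact Finset.sum_congr rfl fun i _ => integral_const_mul _ _
  have hg_val : ∫ x, (x ⬝ᵥ Λ.mulVec x + q ⬝ᵥ x + t) ∂F
      = (∑ i, ∑ j, Λ i j * (∫ x, x i * x j ∂F)) + (∑ i, q i * (∫ x, x i ∂F)) + t := by
    have hgq : Integrable (fun x : Fin n → ℝ => x ⬝ᵥ Λ.mulVec x + q ⬝ᵥ x) F :=
      hquad_int.add hlin_int
    rw [integral_add hgq (integrable_const t),
      integral_add hquad_int hlin_int, hquad_val, hlin_val, integral_const]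
    simp [measure_univ]
  -- trace bound
  have htrace0 : 0 ≤ (Λ * (γ2 • Sig - Matrix.of fun i j =>
      ∫ x, (x i - μ i) * (x j - μ j) ∂F)).trace := trace_mul_psd_nonneg hΛ hcov
  have htrace_expand : (Λ * (γ2 • Sig - Matrix.of fun i j =>
      ∫ x, (x i - μ i) * (x j - μ j) ∂F)).trace
      = ∑ i, ∑ j, Λ i j * (γ2 * Sig j i - ∫ x, (x j - μ j) * (x i - μ i) ∂F) := by
    simp [Matrix.trace, Matrix.mul_apply, Matrix.diag, Matrix.sub_apply, Matrix.smul_apply,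
      smul_eq_mul]
  have hCsymm : ∀ i j : Fin n, (∫ x, (x j - μ j) * (x i - μ i) ∂F)
      = ∫ x, (x i - μ i) * (x j - μ j) ∂F := by
    intro i j
    exact integral_congr_ae (Filter.Eventually.of_forall fun x => mul_comm _ _)
  have htrace : ∑ i, ∑ j, Λ i j * (∫ x, (x i - μ i) * (x j - μ j) ∂F)
      ≤ ∑ i, ∑ j, Λ i j * (γ2 * Sig j i) := by
    rw [htrace_expand] at htrace0
    have : ∑ i, ∑ j, Λ i j * (γ2 * Sig j i - ∫ x, (x j - μ j) * (x i - μ i) ∂F)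
        = ∑ i, ∑ j, (Λ i j * (γ2 * Sig j i)
          - Λ i j * (∫ x, (x i - μ i) * (x j - μ j) ∂F)) := by
      refine Finset.sum_congr rfl fun i _ => Finset.sum_congr rfl fun j _ => ?_
      rw [hCsymm i j]; ring
    rw [this] at htrace0
    simp only [Finset.sum_sub_distrib] at htrace0
    linarith
  -- symmetry of Λ
  have hΛsymm : ∀ i j : Fin n, Λ i j = Λ j i := by
    intro i j
    have h := hΛ.isHermitian
    rw [Matrix.IsHermitian, Matrix.conjTranspose_eq_transpose_of_trivial] at h
    exact (congrFun (congrFun h i) j).symm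
  -- Cauchy-Schwarz bound
  have hcs := cs_bound hSig hγ1 ((fun i => ∫ x, x i ∂F) - μ) (q + (2:ℝ) • Λ.mulVec μ) hmean
  -- trace expansion of the target
  have hT : (Λ * (γ2 • Sig + Matrix.vecMulVec μ μ)).trace
      = ∑ i, ∑ j, Λ i j * (γ2 * Sig j i) + ∑ i, ∑ j, Λ i j * (μ j * μ i) := by
    simp [Matrix.trace, Matrix.mul_apply, Matrix.diag, Matrix.add_apply, Matrix.smul_apply,
      smul_eq_mul, Matrix.vecMulVec_apply, mul_add, Finset.sum_add_distrib]
  -- the algebraic identity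
  have hvd : (q + (2:ℝ) • Λ.mulVec μ) ⬝ᵥ ((fun i => ∫ x, x i ∂F) - μ)
      = ∑ i, (q i + 2 * ∑ j, Λ i j * μ j) * ((∫ x, x i ∂F) - μ i) := by
    simp [dotProduct, Matrix.mulVec, Pi.add_apply, Pi.sub_apply, Pi.smul_apply, smul_eq_mul]
  have hmain : (∑ i, ∑ j, Λ i j * (∫ x, x i * x j ∂F)) + (∑ i, q i * (∫ x, x i ∂F))
      ≤ (∑ i, ∑ j, Λ i j * (γ2 * Sig j i) + ∑ i, ∑ j, Λ i j * (μ j * μ i))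
        + (q + (2:ℝ) • Λ.mulVec μ) ⬝ᵥ ((fun i => ∫ x, x i ∂F) - μ) + q ⬝ᵥ μ := by
    have hsplit : ∑ i, ∑ j, Λ i j * (∫ x, x i * x j ∂F)
        = (∑ i, ∑ j, Λ i j * (∫ x, (x i - μ i) * (x j - μ j) ∂F))
          + ∑ i, ∑ j, Λ i j * (μ j * (∫ x, x i ∂F) + μ i * (∫ x, x j ∂F) - μ i * μ j) := by
      rw [← Finset.sum_add_distrib]
      refine Finset.sum_congr rfl fun i _ => ?_
      rw [← Finset.sum_add_distrib]
      refine Finset.sum_congr rfl fun j _ => ?_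
      rw [hmom i j]; ring
    -- handle the cross term using symmetry of Λ
    have hswap : ∑ i, ∑ j, Λ i j * (μ i * (∫ x, x j ∂F))
        = ∑ i, ∑ j, Λ i j * (μ j * (∫ x, x i ∂F)) := by
      rw [Finset.sum_comm]
      exact Finset.sum_congr rfl fun i _ => Finset.sum_congr rfl fun j _ => by
        rw [hΛsymm j i]
    have hlin2 : ∑ i, ∑ j, Λ i j * (μ j * (∫ x, x i ∂F) + μ i * (∫ x, x j ∂F) - μ i * μ j)
        = 2 * (∑ i, ∑ j, Λ i j * (μ j * (∫ x, x i ∂F))) - ∑ i, ∑ j, Λ i j * (μ i * μ j) := by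
      have e1 : ∀ i j : Fin n,
          Λ i j * (μ j * (∫ x, x i ∂F) + μ i * (∫ x, x j ∂F) - μ i * μ j)
          = Λ i j * (μ j * (∫ x, x i ∂F)) + Λ i j * (μ i * (∫ x, x j ∂F))
            - Λ i j * (μ i * μ j) := fun i j => by ring
      simp_rw [e1]
      simp only [Finset.sum_sub_distrib, Finset.sum_add_distrib]
      rw [hswap]; ring
    rw [hsplit, hlin2, hvd]
    have hqμ : q ⬝ᵥ μ = ∑ i, q i * μ i := rfl
    have hS1 : ∑ i, ∑ j, Λ i j * (μ j * (∫ x, x i ∂F))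
        = ∑ i, (∑ j, Λ i j * μ j) * (∫ x, x i ∂F) := by
      refine Finset.sum_congr rfl fun i _ => ?_
      rw [Finset.sum_mul]
      exact Finset.sum_congr rfl fun j _ => by ring
    have hS2 : ∑ i, ∑ j, Λ i j * (μ i * μ j) = ∑ i, (∑ j, Λ i j * μ j) * μ i := by
      refine Finset.sum_congr rfl fun i _ => ?_
      rw [Finset.sum_mul]
      exact Finset.sum_congr rfl fun j _ => by ring
    have hS3 : ∑ i, ∑ j, Λ i j * (μ j * μ i) = ∑ i, (∑ j, Λ i j * μ j) * μ i := by
      refine Finset.sum_congr rfl fun i _ => ?_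
      rw [Finset.sum_mul]
      exact Finset.sum_congr rfl fun j _ => by ring
    have hS4 : ∑ i, (q i + 2 * ∑ j, Λ i j * μ j) * ((∫ x, x i ∂F) - μ i)
        = (∑ i, q i * (∫ x, x i ∂F)) - (∑ i, q i * μ i)
          + 2 * (∑ i, (∑ j, Λ i j * μ j) * (∫ x, x i ∂F))
          - 2 * (∑ i, (∑ j, Λ i j * μ j) * μ i) := by
      rw [Finset.mul_sum, Finset.mul_sum, ← Finset.sum_sub_distrib, ← Finset.sum_add_distrib,
        ← Finset.sum_sub_distrib]
      exact Finset.sum_congr rfl fun i _ => by ring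
    rw [hqμ, hS1, hS2, hS3, hS4]
    linarith [htrace]
  -- final assembly
  have hqμ : q ⬝ᵥ μ = ∑ i, q i * μ i := rfl
  rw [hT]
  rw [hg_val] at hstepA
  linarith [hstepA, hmain, hcs]
end
end

section
/- Let F be a Borel probability measure on ℝⁿ with finite second moments and mean m = E_F[x]. Let μ ∈ ℝⁿ, let Σ ∈ ℝ^{n×n} be symmetric positive definite, let γ₁, γ₂ ≥ 0, let Λ ∈ ℝ^{n×n} be symmetric positive semidefinite and let q ∈ ℝⁿ. If (m − μ)ᵀ Σ⁻¹ (m − μ) ≤ γ₁ and the matrix γ₂Σ − E_F[(x − μ)(x − μ)ᵀ] is positive semidefinite, then E_F[xᵀΛx + qᵀx] ≤ tr(Λ(γ₂Σ + μμᵀ)) + √γ₁ ‖Σ^{1/2}(q + 2Λμ)‖₂ + qᵀμ. -/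
open Matrix MeasureTheory ENNReal

noncomputable section

section
open scoped ComplexOrder

/-- The positive semidefinite square root of a positive semidefinite matrix
(restored: removed from Mathlib since the original was written). -/
def Matrix.PosSemidef.sqrt {n 𝕜 : Type*} [Fintype n] [DecidableEq n] [RCLike 𝕜]
    {A : Matrix n n 𝕜} (hA : A.PosSemidef) : Matrix n n 𝕜 :=
  (hA.1.eigenvectorUnitary : Matrix n n 𝕜) *
    diagonal (fun i => ((Real.sqrt (hA.1.eigenvalues i) : ℝ) : 𝕜)) *
    (star hA.1.eigenvectorUnitary : Matrix n n 𝕜)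

end

lemma Matrix.PosSemidef.sqrt_mul_self {ι : Type*} [Fintype ι] [DecidableEq ι]
    {A : Matrix ι ι ℝ} (hA : A.PosSemidef) : hA.sqrt * hA.sqrt = A := by
  have hU : (star hA.1.eigenvectorUnitary : Matrix ι ι ℝ) * (hA.1.eigenvectorUnitary : Matrix ι ι ℝ) = 1 := by
    simp
  have e : hA.sqrt * hA.sqrt = (hA.1.eigenvectorUnitary : Matrix ι ι ℝ) *
      (diagonal (fun i => ((Real.sqrt (hA.1.eigenvalues i) : ℝ) : ℝ)) *
        diagonal (fun i => ((Real.sqrt (hA.1.eigenvalues i) : ℝ) : ℝ))) *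
      (star hA.1.eigenvectorUnitary : Matrix ι ι ℝ) := by
    simp only [Matrix.PosSemidef.sqrt, mul_assoc, RCLike.ofReal_real_eq_id, id]
    rw [← mul_assoc (star hA.1.eigenvectorUnitary : Matrix ι ι ℝ), hU, one_mul]
  rw [e, diagonal_mul_diagonal]
  conv_rhs => rw [hA.1.spectral_theorem]
  rw [Unitary.conjStarAlgAut_apply]
  congr 2
  congr 1
  funext i
  simp [Real.mul_self_sqrt (hA.eigenvalues_nonneg i)]

lemma Matrix.PosSemidef.posSemidef_sqrt {ι : Type*} [Fintype ι] [DecidableEq ι]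
    {A : Matrix ι ι ℝ} (hA : A.PosSemidef) : hA.sqrt.PosSemidef := by
  have hD : (diagonal (fun i => ((Real.sqrt (hA.1.eigenvalues i) : ℝ) : ℝ))).PosSemidef :=
    posSemidef_diagonal_iff.mpr fun i => by simp [Real.sqrt_nonneg]
  have := hD.mul_mul_conjTranspose_same (hA.1.eigenvectorUnitary : Matrix ι ι ℝ)
  unfold Matrix.PosSemidef.sqrt
  simp only [RCLike.ofReal_real_eq_id, id]
  rw [Matrix.star_eq_conjTranspose]
  exact this

section aux
variable {n : ℕ}

lemma trace_mul_eq_sum (A B : Matrix (Fin n) (Fin n) ℝ) :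
    (A * B).trace = ∑ i, ∑ j, A i j * B j i := by
  simp [Matrix.trace, Matrix.mul_apply, Matrix.diag]

lemma sum_sum_mul_eq_dot (A : Matrix (Fin n) (Fin n) ℝ) (a b : Fin n → ℝ) :
    ∑ i, ∑ j, A i j * (a i * b j) = a ⬝ᵥ A *ᵥ b := by
  simp only [dotProduct, Matrix.mulVec, Finset.mul_sum]
  exact Finset.sum_congr rfl fun i _ => Finset.sum_congr rfl fun j _ => by ring

lemma psd_trace_nonneg_s4 {A : Matrix (Fin n) (Fin n) ℝ} (hA : A.PosSemidef) :
    0 ≤ A.trace := by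
  rw [Matrix.trace]
  refine Finset.sum_nonneg fun i _ => ?_
  have h := hA.dotProduct_mulVec_nonneg (Pi.single i 1)
  simpa [Matrix.mulVec, dotProduct, Pi.single_apply, Finset.sum_ite_eq, Matrix.diag] using h

lemma trace_mul_nonneg' {A B : Matrix (Fin n) (Fin n) ℝ} (hA : A.PosSemidef) (hB : B.PosSemidef) :
    0 ≤ (A * B).trace := by
  have h1 : A * B = hA.sqrt * hA.sqrt * B := by rw [hA.sqrt_mul_self]
  rw [h1, ← Matrix.trace_mul_cycle hA.sqrt B hA.sqrt]
  have hpsd : (hA.sqrt * B * hA.sqrtᴴ).PosSemidef := hB.mul_mul_conjTranspose_same hA.sqrt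
  rw [hA.posSemidef_sqrt.1] at hpsd
  exact psd_trace_nonneg_s4 hpsd

end aux

/-- If `F` is a Borel probability measure with finite second moments,
mean `m` with `(m − μ)ᵀΣ⁻¹(m − μ) ≤ γ₁` and `γ₂Σ − E_F[(x − μ)(x − μ)ᵀ] ⪰ 0`, then for
`Λ ⪰ 0` and `q`, `E_F[xᵀΛx + qᵀx] ≤ tr(Λ(γ₂Σ + μμᵀ)) + √γ₁‖Σ^{1/2}(q + 2Λμ)‖₂ + qᵀμ`. -/
theorem expectation_quadratic_bound {n : ℕ} (hn : 1 ≤ n)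
    (F : Measure (Fin n → ℝ)) [IsProbabilityMeasure F]
    (hmom1 : ∀ i, Integrable (fun x => x i) F)
    (hmom2 : ∀ i j, Integrable (fun x => x i * x j) F)
    (μ : Fin n → ℝ) (Sig : Matrix (Fin n) (Fin n) ℝ)
    (hSig : Sig.PosDef)
    (γ1 γ2 : ℝ) (hγ1 : 0 ≤ γ1) (hγ2 : 0 ≤ γ2)
    (Λ : Matrix (Fin n) (Fin n) ℝ) (hΛ : Λ.PosSemidef) (q : Fin n → ℝ)
    (hmean : ((fun i => ∫ x, x i ∂F) - μ) ⬝ᵥ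
        Sig⁻¹.mulVec ((fun i => ∫ x, x i ∂F) - μ) ≤ γ1)
    (hcov : (γ2 • Sig
        - Matrix.of fun i j => ∫ x, (x i - μ i) * (x j - μ j) ∂F).PosSemidef) :
    ∫ x, (x ⬝ᵥ Λ.mulVec x + q ⬝ᵥ x) ∂F ≤
      (Λ * (γ2 • Sig + Matrix.vecMulVec μ μ)).trace
        + Real.sqrt γ1 * pNormE 2 (hSig.posSemidef.sqrt.mulVec (q + (2 : ℝ) • Λ.mulVec μ))
        + q ⬝ᵥ μ := by
  classical
  set m : Fin n → ℝ := fun i => ∫ x, x i ∂F with hm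
  set Smat : Matrix (Fin n) (Fin n) ℝ :=
    Matrix.of fun i j => ∫ x, (x i - μ i) * (x j - μ j) ∂F with hSmat
  set M : Fin n → Fin n → ℝ := fun i j => ∫ x, x i * x j ∂F with hMdef
  set d : Fin n → ℝ := m - μ with hd
  set v : Fin n → ℝ := q + (2 : ℝ) • Λ.mulVec μ with hv
  set R : Matrix (Fin n) (Fin n) ℝ := hSig.posSemidef.sqrt with hRdef
  -- basic symmetry facts
  have hΛt : Λᵀ = Λ := by
    have := hΛ.1
    simpa [Matrix.IsHermitian, Matrix.conjTranspose_eq_transpose_of_trivial] using this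
  have hRsym : Rᵀ = R := by
    have := hSig.posSemidef.posSemidef_sqrt.1
    simpa [Matrix.IsHermitian, Matrix.conjTranspose_eq_transpose_of_trivial] using this
  have hRR : R * R = Sig := hSig.posSemidef.sqrt_mul_self
  have hdot : ∀ a b : Fin n → ℝ, a ⬝ᵥ Λ.mulVec b = b ⬝ᵥ Λ.mulVec a := by
    intro a b
    rw [Matrix.dotProduct_mulVec, ← Matrix.mulVec_transpose, hΛt, dotProduct_comm]
  -- Step 1: value of the integral
  have hfun : (fun x : Fin n → ℝ => x ⬝ᵥ Λ.mulVec x + q ⬝ᵥ x)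
      = fun x => (∑ i, ∑ j, Λ i j * (x i * x j)) + ∑ i, q i * x i := by
    funext x
    simp only [dotProduct, Matrix.mulVec, Finset.mul_sum]
    congr 1
    exact Finset.sum_congr rfl fun i _ => Finset.sum_congr rfl fun j _ => by ring
  have hInt1 : Integrable (fun x : Fin n → ℝ => ∑ i, ∑ j, Λ i j * (x i * x j)) F :=
    integrable_finset_sum _ fun i _ =>
      integrable_finset_sum _ fun j _ => (hmom2 i j).const_mul _
  have hInt2 : Integrable (fun x : Fin n → ℝ => ∑ i, q i * x i) F :=
    integrable_finset_sum _ fun i _ => (hmom1 i).const_mul _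
  have hLHS : ∫ x, (x ⬝ᵥ Λ.mulVec x + q ⬝ᵥ x) ∂F
      = (∑ i, ∑ j, Λ i j * M i j) + q ⬝ᵥ m := by
    rw [hfun, integral_add hInt1 hInt2,
      integral_finset_sum _ (f := fun i (x : Fin n → ℝ) => ∑ j, Λ i j * (x i * x j)) (fun i _ =>
        integrable_finset_sum _ fun j _ => (hmom2 i j).const_mul _),
      integral_finset_sum _ (f := fun i (x : Fin n → ℝ) => q i * x i) (fun i _ => (hmom1 i).const_mul _)]
    congr 1
    · refine Finset.sum_congr rfl fun i _ => ?_
      rw [integral_finset_sum _ (f := fun j (x : Fin n → ℝ) => Λ i j * (x i * x j)) (fun j _ => (hmom2 i j).const_mul _)]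
      exact Finset.sum_congr rfl fun j _ => integral_const_mul _ _
    · simp only [dotProduct]
      exact Finset.sum_congr rfl fun i _ => integral_const_mul _ _
  -- Step 2: second-moment matrix decomposition
  have hM : ∀ i j, M i j = Smat i j + μ j * m i + μ i * m j - μ i * μ j := by
    intro i j
    have hrw : (fun x : Fin n → ℝ => (x i - μ i) * (x j - μ j))
        = fun x => x i * x j - μ j * x i - μ i * x j + μ i * μ j := funext fun x => by ring
    have ia : Integrable (fun x : Fin n → ℝ => μ j * x i) F := (hmom1 i).const_mul _
    have ib : Integrable (fun x : Fin n → ℝ => μ i * x j) F := (hmom1 j).const_mul _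
    have ic : Integrable (fun x : Fin n → ℝ => x i * x j - μ j * x i) F :=
      (hmom2 i j).sub ia
    have id' : Integrable (fun x : Fin n → ℝ => x i * x j - μ j * x i - μ i * x j) F :=
      ic.sub ib
    have hS : Smat i j = M i j - μ j * m i - μ i * m j + μ i * μ j := by
      show (∫ x, (x i - μ i) * (x j - μ j) ∂F) = _
      rw [hrw, integral_add id' (integrable_const _),
        integral_sub ic ib, integral_sub (hmom2 i j) ia,
        integral_const_mul, integral_const_mul, integral_const]
      simp [hm, hMdef]
    linarith [hS]
  -- Step 2': symmetry of Smat
  have hSsym : ∀ i j, Smat i j = Smat j i := by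
    intro i j
    show (∫ x, (x i - μ i) * (x j - μ j) ∂F) = ∫ x, (x j - μ j) * (x i - μ i) ∂F
    exact integral_congr_ae (Filter.Eventually.of_forall fun x => by ring)
  -- Step 3: sum decomposition
  have hMsum : ∑ i, ∑ j, Λ i j * M i j
      = (Λ * Smat).trace + (m ⬝ᵥ Λ.mulVec μ + μ ⬝ᵥ Λ.mulVec m - μ ⬝ᵥ Λ.mulVec μ) := by
    have expand : ∑ i, ∑ j, Λ i j * M i j
        = ∑ i, ∑ j, (Λ i j * Smat i j + Λ i j * (m i * μ j)
            + Λ i j * (μ i * m j) - Λ i j * (μ i * μ j)) := by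
      refine Finset.sum_congr rfl fun i _ => Finset.sum_congr rfl fun j _ => ?_
      rw [hM i j]; ring
    rw [expand]
    simp only [Finset.sum_add_distrib, Finset.sum_sub_distrib]
    rw [sum_sum_mul_eq_dot Λ m μ, sum_sum_mul_eq_dot Λ μ m, sum_sum_mul_eq_dot Λ μ μ,
      trace_mul_eq_sum]
    have : ∑ i, ∑ j, Λ i j * Smat j i = ∑ i, ∑ j, Λ i j * Smat i j :=
      Finset.sum_congr rfl fun i _ => Finset.sum_congr rfl fun j _ => by rw [hSsym i j]
    rw [this]; ring
  -- Step 4: trace bound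
  have htr : (Λ * Smat).trace ≤ γ2 * (Λ * Sig).trace := by
    have h0 := trace_mul_nonneg' hΛ hcov
    rw [Matrix.mul_sub, Matrix.trace_sub, Matrix.mul_smul, Matrix.trace_smul,
      smul_eq_mul] at h0
    linarith
  -- Step 5: RHS trace
  have hvmv : ∀ a b : Fin n → ℝ, (Λ * Matrix.vecMulVec a b).trace = b ⬝ᵥ Λ.mulVec a := by
    intro a b
    rw [trace_mul_eq_sum, ← sum_sum_mul_eq_dot Λ b a]
    exact Finset.sum_congr rfl fun i _ => Finset.sum_congr rfl fun j _ => by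
      rw [Matrix.vecMulVec_apply]; ring
  have hRHS : (Λ * (γ2 • Sig + Matrix.vecMulVec μ μ)).trace
      = γ2 * (Λ * Sig).trace + μ ⬝ᵥ Λ.mulVec μ := by
    rw [Matrix.mul_add, Matrix.trace_add, Matrix.mul_smul, Matrix.trace_smul, smul_eq_mul,
      hvmv μ μ]
  -- Step 6: Cauchy-Schwarz part
  have hdet : IsUnit R.det := by
    have hdd : R.det * R.det = Sig.det := by rw [← Matrix.det_mul, hRR]
    have : Sig.det ≠ 0 := ne_of_gt hSig.det_pos
    refine isUnit_iff_ne_zero.mpr fun h => this ?_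
    rw [← hdd, h, mul_zero]
  have hRinv : R * R⁻¹ = 1 := Matrix.mul_nonsing_inv R hdet
  have hinvmul : R⁻¹ * R⁻¹ = Sig⁻¹ := by rw [← hRR, Matrix.mul_inv_rev]
  have hRinvsym : (R⁻¹)ᵀ = R⁻¹ := by rw [Matrix.transpose_nonsing_inv, hRsym]
  set w : Fin n → ℝ := R⁻¹.mulVec d with hw
  have hdw : d = R.mulVec w := by
    rw [hw, Matrix.mulVec_mulVec, hRinv, Matrix.one_mulVec]
  have hvd : v ⬝ᵥ d = (R.mulVec v) ⬝ᵥ w := by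
    conv_lhs => rw [hdw]
    rw [Matrix.dotProduct_mulVec, ← Matrix.mulVec_transpose, hRsym]
  have hww : w ⬝ᵥ w ≤ γ1 := by
    have : w ⬝ᵥ w = d ⬝ᵥ Sig⁻¹.mulVec d := by
      conv_lhs => rw [hw, Matrix.dotProduct_mulVec, ← Matrix.mulVec_transpose, hRinvsym,
        Matrix.mulVec_mulVec, hinvmul]
      rw [dotProduct_comm]
    rw [this]
    exact hmean
  have hpn : pNormE 2 (R.mulVec v) = Real.sqrt (∑ i, (R.mulVec v) i ^ 2) := by
    rw [pNormE, if_neg (by norm_num)]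
    have h2 : ((2 : ℝ≥0∞)).toReal = 2 := by norm_num
    rw [h2]
    have habs : ∀ i, |(R.mulVec v) i| ^ (2 : ℝ) = (R.mulVec v) i ^ 2 := fun i => by
      rw [show (2 : ℝ) = ((2 : ℕ) : ℝ) by norm_num, Real.rpow_natCast, sq_abs]
    rw [Finset.sum_congr rfl fun i _ => habs i]
    rw [Real.sqrt_eq_rpow]
  have hCS : v ⬝ᵥ d ≤ Real.sqrt γ1 * pNormE 2 (R.mulVec v) := by
    rw [hvd, hpn]
    calc (R.mulVec v) ⬝ᵥ w
        = ∑ i, (R.mulVec v) i * w i := rfl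
      _ ≤ Real.sqrt (∑ i, (R.mulVec v) i ^ 2) * Real.sqrt (∑ i, w i ^ 2) :=
          Real.sum_mul_le_sqrt_mul_sqrt _ _ _
      _ ≤ Real.sqrt (∑ i, (R.mulVec v) i ^ 2) * Real.sqrt γ1 := by
          refine mul_le_mul_of_nonneg_left (Real.sqrt_le_sqrt ?_) (Real.sqrt_nonneg _)
          calc ∑ i, w i ^ 2 = w ⬝ᵥ w := by
                exact Finset.sum_congr rfl fun i _ => (sq (w i)) ▸ rfl
            _ ≤ γ1 := hww
      _ = Real.sqrt γ1 * Real.sqrt (∑ i, (R.mulVec v) i ^ 2) := mul_comm _ _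
  -- Final assembly
  rw [hLHS, hMsum, hRHS]
  have hmμd : m = μ + d := by rw [hd]; abel
  have hqm : q ⬝ᵥ m = q ⬝ᵥ μ + q ⬝ᵥ d := by
    rw [hmμd, dotProduct_add]
  have hlin : m ⬝ᵥ Λ.mulVec μ + μ ⬝ᵥ Λ.mulVec m - μ ⬝ᵥ Λ.mulVec μ
      = μ ⬝ᵥ Λ.mulVec μ + 2 * ((Λ.mulVec μ) ⬝ᵥ d) := by
    have h1 : m ⬝ᵥ Λ.mulVec μ = μ ⬝ᵥ Λ.mulVec m := hdot m μ
    have h2 : μ ⬝ᵥ Λ.mulVec m = μ ⬝ᵥ Λ.mulVec μ + (Λ.mulVec μ) ⬝ᵥ d := by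
      conv_lhs => rw [hmμd]
      rw [Matrix.mulVec_add, dotProduct_add]
      congr 1
      rw [hdot μ d, dotProduct_comm]
    rw [h1, h2]; ring
  have hvdd : v ⬝ᵥ d = q ⬝ᵥ d + 2 * ((Λ.mulVec μ) ⬝ᵥ d) := by
    rw [hv, add_dotProduct, smul_dotProduct, smul_eq_mul]
  linarith [hCS]
end
end

section
/- Let n ≥ 1, let Λ ∈ ℝ^{n×n} be symmetric, q ∈ ℝⁿ and c ∈ ℝ. Then xᵀΛx + qᵀx + c ≥ 0 for all x ∈ ℝⁿ if and only if the (n+1)×(n+1) symmetric block matrix [Λ, q/2; qᵀ/2, c] is positive semidefinite. -/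
open Matrix MeasureTheory ENNReal

noncomputable section

/-- The symmetric block matrix `[Λ, β; βᵀ, c]`. -/
def blockMx {ι : Type*} (Λ : Matrix ι ι ℝ) (β : ι → ℝ) (c : ℝ) :
    Matrix (ι ⊕ Unit) (ι ⊕ Unit) ℝ :=
  Matrix.fromBlocks Λ (Matrix.of fun i _ => β i) (Matrix.of fun _ j => β j)
    (Matrix.of fun _ _ => c)

lemma blockMx_key {n : ℕ} (Λ : Matrix (Fin n) (Fin n) ℝ) (β : Fin n → ℝ) (c : ℝ)
    (x : Fin n → ℝ) (t : ℝ) :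
    Sum.elim x (fun _ : Unit => t) ⬝ᵥ (blockMx Λ β c) *ᵥ Sum.elim x (fun _ => t)
      = x ⬝ᵥ Λ *ᵥ x + 2 * t * (β ⬝ᵥ x) + c * t ^ 2 := by
  simp only [blockMx, dotProduct, mulVec, Fintype.sum_sum_type, Sum.elim_inl, Sum.elim_inr,
    fromBlocks_apply₁₁, fromBlocks_apply₁₂, fromBlocks_apply₂₁, fromBlocks_apply₂₂, of_apply,
    Finset.univ_unique, Finset.sum_const, Finset.card_singleton, one_smul, smul_eq_mul]
  simp only [mul_add, Finset.sum_add_distrib]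
  have : ∑ i, x i * (β i * t) = t * ∑ i, β i * x i := by
    rw [Finset.mul_sum]; exact Finset.sum_congr rfl fun i _ => by ring
  rw [this]; ring

lemma aux_nonneg {a b c : ℝ} (h : ∀ s : ℝ, 0 ≤ a * s ^ 2 + b * s + c) : 0 ≤ a := by
  by_contra hneg
  push_neg at hneg
  have key2 : ∀ s : ℝ, 0 ≤ a * s ^ 2 + c := fun s => by
    have h1 := h s; have h2 := h (-s); nlinarith
  set m : ℝ := max (c / (-a)) 0 with hm_def
  have hm : 0 ≤ m := le_max_right _ _
  have hsq : Real.sqrt m ^ 2 = m := Real.sq_sqrt hm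
  have hc : c ≤ m * (-a) := (div_le_iff₀ (by linarith)).mp (le_max_left _ _)
  have h3 := key2 (Real.sqrt m + 1)
  nlinarith [Real.sqrt_nonneg m]

/-- For symmetric `Λ`, the quadratic `xᵀΛx + qᵀx + c` is nonnegative
on all of `ℝⁿ` iff the block matrix `[Λ, q/2; qᵀ/2, c]` is positive semidefinite. -/
theorem quadratic_nonneg_iff_blockMatrix_posSemidef {n : ℕ} (hn : 1 ≤ n)
    (Λ : Matrix (Fin n) (Fin n) ℝ) (hΛ : Λ.IsSymm) (q : Fin n → ℝ) (c : ℝ) :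
    (∀ x : Fin n → ℝ, 0 ≤ x ⬝ᵥ Λ.mulVec x + q ⬝ᵥ x + c) ↔
      (blockMx Λ ((1 / 2 : ℝ) • q) c).PosSemidef := by
  have hsm : ∀ x : Fin n → ℝ, ((1 / 2 : ℝ) • q) ⬝ᵥ x = (1 / 2) * (q ⬝ᵥ x) :=
    fun x => smul_dotProduct _ _ _
  constructor
  · intro h
    refine posSemidef_iff_dotProduct_mulVec.mpr ⟨?_, ?_⟩
    · ext i j
      cases i <;> cases j <;>
        simp [blockMx, Matrix.conjTranspose_apply, hΛ.apply]
    · intro z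
      rw [star_trivial]
      have hz : z = Sum.elim (z ∘ Sum.inl) (fun _ : Unit => z (Sum.inr ())) := by
        funext s; cases s with
        | inl i => rfl
        | inr u => cases u; rfl
      rw [hz, blockMx_key, hsm]
      set x : Fin n → ℝ := z ∘ Sum.inl
      set t : ℝ := z (Sum.inr ())
      rcases eq_or_ne t 0 with ht | ht
      · rw [ht]
        have ha : 0 ≤ x ⬝ᵥ Λ *ᵥ x := by
          apply aux_nonneg (b := q ⬝ᵥ x) (c := c)
          intro s
          have := h (s • x)
          rw [Matrix.mulVec_smul, smul_dotProduct, dotProduct_smul, dotProduct_smul,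
            smul_eq_mul, smul_eq_mul, smul_eq_mul, ← mul_assoc, ← sq] at this
          nlinarith [this]
        nlinarith
      · have h' := h ((1 / t) • x)
        rw [Matrix.mulVec_smul, smul_dotProduct, dotProduct_smul, dotProduct_smul,
          smul_eq_mul, smul_eq_mul, smul_eq_mul, ← mul_assoc, ← sq] at h'
        have hexp : x ⬝ᵥ Λ *ᵥ x + t * (q ⬝ᵥ x) + c * t ^ 2
            = t ^ 2 * ((1 / t) ^ 2 * (x ⬝ᵥ Λ *ᵥ x) + 1 / t * (q ⬝ᵥ x) + c) := by
          field_simp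
        have h0 : 0 ≤ t ^ 2 * ((1 / t) ^ 2 * (x ⬝ᵥ Λ *ᵥ x) + 1 / t * (q ⬝ᵥ x) + c) :=
          mul_nonneg (sq_nonneg t) h'
        linarith [hexp ▸ h0]
  · intro hpsd x
    have := hpsd.dotProduct_mulVec_nonneg (Sum.elim x fun _ => 1)
    rw [star_trivial, blockMx_key, hsm] at this
    linarith
end
end

section
/- Let n ≥ 1, 1 ≤ r ≤ n, let A ∈ ℝ^{n×n} be invertible, x̂, μ ∈ ℝⁿ, γ̄ > 0, p ∈ [1,∞] with conjugate exponent q, let Y = {x̂ + Aζ : ζ ∈ ℝⁿ, ‖ζ‖_p ≤ √γ̄}, let S ∈ ℝ^{n×r} have rank r, and set Z = {z ∈ ℝ^r : μ + S z ∈ Y}. Assume the Slater condition ‖A⁻¹(μ − x̂)‖_p < √γ̄ (so 0 lies in the interior of the constraint defining Z). Then for every ω ∈ ℝ^r, sup_{z∈Z} ωᵀz = inf { (x̂ − μ)ᵀv + √γ̄ ‖Aᵀv‖_q : v ∈ ℝⁿ, Sᵀv = ω }. -/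
open Matrix MeasureTheory ENNReal Pointwise
open scoped NNReal

noncomputable section

section helpers
variable {m : ℕ} {p q : ℝ≥0∞}

lemma pNormE_eq_norm [inst : Fact (1 ≤ p)] (x : Fin m → ℝ) :
    pNormE p x = ‖(WithLp.equiv p (Fin m → ℝ)).symm x‖ := by
  rcases eq_or_ne p ∞ with h | h
  · subst h
    rw [pNormE, if_pos rfl, PiLp.norm_eq_ciSup]
    simp [Real.norm_eq_abs]
  · have hp := inst.out
    have h0 : p ≠ 0 := (lt_of_lt_of_le zero_lt_one hp).ne'
    rw [pNormE, if_neg h, PiLp.norm_eq_sum (ENNReal.toReal_pos h0 h)]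
    simp [Real.norm_eq_abs]

lemma pNormE_nonneg (hp : 1 ≤ p) (x : Fin m → ℝ) : 0 ≤ pNormE p x := by
  haveI := Fact.mk hp; rw [pNormE_eq_norm]; exact norm_nonneg _

lemma pNormE_neg (hp : 1 ≤ p) (x : Fin m → ℝ) : pNormE p (-x) = pNormE p x := by
  haveI := Fact.mk hp; rw [pNormE_eq_norm, pNormE_eq_norm]
  exact norm_neg _

lemma pNormE_smul (hp : 1 ≤ p) (t : ℝ) (x : Fin m → ℝ) :
    pNormE p (t • x) = |t| * pNormE p x := by
  haveI := Fact.mk hp; rw [pNormE_eq_norm, pNormE_eq_norm]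
  have : (WithLp.equiv p (Fin m → ℝ)).symm (t • x)
      = t • (WithLp.equiv p (Fin m → ℝ)).symm x := rfl
  rw [this, norm_smul, Real.norm_eq_abs]

lemma pNormE_add_le (hp : 1 ≤ p) (x y : Fin m → ℝ) :
    pNormE p (x + y) ≤ pNormE p x + pNormE p y := by
  haveI := Fact.mk hp; rw [pNormE_eq_norm, pNormE_eq_norm, pNormE_eq_norm]
  exact norm_add_le _ _

lemma convex_pball (hp : 1 ≤ p) (γ : ℝ) : Convex ℝ {x : Fin m → ℝ | pNormE p x ≤ γ} := by
  intro x hx y hy a b ha hb hab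
  have h1 := pNormE_add_le hp (a • x) (b • y)
  rw [pNormE_smul hp, pNormE_smul hp, abs_of_nonneg ha, abs_of_nonneg hb] at h1
  refine h1.trans ?_
  calc a * pNormE p x + b * pNormE p y ≤ a * γ + b * γ := by
        gcongr <;> [exact hx; exact hy]
    _ = γ := by rw [← add_mul, hab, one_mul]

lemma isCompact_pball (hp : 1 ≤ p) (γ : ℝ) :
    IsCompact {x : Fin m → ℝ | pNormE p x ≤ γ} := by
  haveI := Fact.mk hp
  have h : {x : Fin m → ℝ | pNormE p x ≤ γ}
      = (fun y : PiLp p (fun _ : Fin m => ℝ) => WithLp.equiv p (Fin m → ℝ) y) ''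
        (Metric.closedBall 0 γ) := by
    ext x
    constructor
    · intro hx
      refine ⟨(WithLp.equiv p (Fin m → ℝ)).symm x, ?_, rfl⟩
      rw [Metric.mem_closedBall, dist_zero_right]
      exact le_trans (le_of_eq (pNormE_eq_norm x).symm) hx
    · rintro ⟨y, hy, rfl⟩
      rw [Metric.mem_closedBall, dist_zero_right] at hy
      have : pNormE p (WithLp.equiv p (Fin m → ℝ) y) = ‖y‖ := pNormE_eq_norm _
      exact le_trans (le_of_eq this) hy
  rw [h]
  exact (isCompact_closedBall _ _).image (PiLp.continuousLinearEquiv p ℝ _).continuous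

end helpers

section helpers
variable {m : ℕ} {p q : ℝ≥0∞}

lemma conj_cases (hp : 1 ≤ p) (hq : 1 ≤ q) (hpq : 1 / p + 1 / q = 1) :
    (p = ∞ ∧ q = 1) ∨ (p = 1 ∧ q = ∞) ∨
      (p ≠ ∞ ∧ q ≠ ∞ ∧ p.toReal.HolderConjugate q.toReal) := by
  rcases eq_or_ne p ∞ with hP | hP
  · left
    refine ⟨hP, ?_⟩
    subst hP
    simp only [one_div, ENNReal.inv_top, zero_add] at hpq
    exact (ENNReal.inv_eq_one).mp hpq
  rcases eq_or_ne q ∞ with hQ | hQ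
  · right; left
    refine ⟨?_, hQ⟩
    subst hQ
    simp only [one_div, ENNReal.inv_top, add_zero] at hpq
    exact (ENNReal.inv_eq_one).mp hpq
  right; right
  refine ⟨hP, hQ, ?_⟩
  have hp0 : p ≠ 0 := (lt_of_lt_of_le zero_lt_one hp).ne'
  have hq0 : q ≠ 0 := (lt_of_lt_of_le zero_lt_one hq).ne'
  have hp1 : p ≠ 1 := by
    rintro rfl
    simp only [one_div, inv_one] at hpq
    have : q⁻¹ = 0 := by
      have := ENNReal.add_right_inj (a := 1) (b := q⁻¹) (c := 0) one_ne_top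
      rw [add_zero] at this
      exact this.mp hpq
    exact hQ (ENNReal.inv_eq_zero.mp this)
  have htr : 1 / p.toReal + 1 / q.toReal = 1 := by
    have h1 : (1/p + 1/q).toReal = (1:ℝ≥0∞).toReal := by rw [hpq]
    rw [ENNReal.toReal_add (by simp [hp0]) (by simp [hq0]), ENNReal.toReal_one] at h1
    simpa [one_div, ENNReal.toReal_inv] using h1
  refine Real.holderConjugate_iff.mpr ⟨?_, by simpa [one_div] using htr⟩
  rw [← ENNReal.toReal_one]
  exact (ENNReal.toReal_lt_toReal one_ne_top hP).mpr (lt_of_le_of_ne hp (Ne.symm hp1))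

end helpers

section helpers2
variable {m : ℕ} {p q : ℝ≥0∞}

lemma pNormE_one' (u : Fin m → ℝ) : pNormE 1 u = ∑ i, |u i| := by
  simp [pNormE, ENNReal.toReal_one, Real.rpow_one, if_neg (one_ne_top)]

lemma pNormE_top' (u : Fin m → ℝ) : pNormE ∞ u = ⨆ i, |u i| := by
  simp [pNormE]

lemma holder_top (x y : Fin m → ℝ) : x ⬝ᵥ y ≤ (⨆ i, |x i|) * ∑ i, |y i| := by
  calc x ⬝ᵥ y = ∑ i, x i * y i := rfl
    _ ≤ ∑ i, |x i| * |y i| := by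
        refine Finset.sum_le_sum fun i _ => ?_
        calc x i * y i ≤ |x i * y i| := le_abs_self _
          _ = |x i| * |y i| := abs_mul _ _
    _ ≤ ∑ i, (⨆ j, |x j|) * |y i| := by
        refine Finset.sum_le_sum fun i _ => ?_
        exact mul_le_mul_of_nonneg_right
          (le_ciSup (f := fun j => |x j|) (Set.Finite.bddAbove (Set.finite_range _)) i)
          (abs_nonneg _)
    _ = (⨆ i, |x i|) * ∑ i, |y i| := by rw [Finset.mul_sum]

lemma dotProduct_le_pNormE (hp : 1 ≤ p) (hq : 1 ≤ q) (hpq : 1 / p + 1 / q = 1)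
    (x y : Fin m → ℝ) : x ⬝ᵥ y ≤ pNormE p x * pNormE q y := by
  rcases conj_cases hp hq hpq with ⟨hP, hQ⟩ | ⟨hP, hQ⟩ | ⟨hP, hQ, hc⟩
  · subst hP hQ
    rw [pNormE_top', pNormE_one']
    exact holder_top x y
  · subst hP hQ
    rw [pNormE_one', pNormE_top', mul_comm]
    calc x ⬝ᵥ y = y ⬝ᵥ x := dotProduct_comm _ _
      _ ≤ _ := holder_top y x
  · rw [pNormE, if_neg hP, pNormE, if_neg hQ]
    exact Real.inner_le_Lp_mul_Lq Finset.univ x y hc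

lemma exists_dual_pNormE (hm : 0 < m) (hp : 1 ≤ p) (hq : 1 ≤ q) (hpq : 1 / p + 1 / q = 1)
    (u : Fin m → ℝ) : ∃ y : Fin m → ℝ, pNormE p y ≤ 1 ∧ pNormE q u ≤ u ⬝ᵥ y := by
  haveI : Nonempty (Fin m) := ⟨⟨0, hm⟩⟩
  rcases conj_cases hp hq hpq with ⟨hP, hQ⟩ | ⟨hP, hQ⟩ | ⟨hP, hQ, hc⟩
  · -- p = ∞, q = 1 : y i = sign (u i)
    subst hP hQ
    refine ⟨fun i => if 0 ≤ u i then 1 else -1, ?_, ?_⟩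
    · rw [pNormE_top']
      refine ciSup_le fun i => ?_
      split_ifs <;> simp
    · rw [pNormE_one']
      refine le_of_eq (Finset.sum_congr rfl fun i _ => ?_).symm
      by_cases h : 0 ≤ u i
      · simp [h, abs_of_nonneg h]
      · simp [h, abs_of_neg (lt_of_not_ge h)]
  · -- p = 1, q = ∞ : y = single at argmax
    subst hP hQ
    obtain ⟨i₀, hi₀⟩ := Finite.exists_max (fun i => |u i|)
    set sg : ℝ := if 0 ≤ u i₀ then 1 else -1 with hsg
    refine ⟨Pi.single i₀ sg, ?_, ?_⟩
    · rw [pNormE_one']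
      have habs : ∀ i : Fin m, |Pi.single (M := fun _ : Fin m => ℝ) i₀ sg i|
          = if i = i₀ then 1 else 0 := by
        intro i
        rcases eq_or_ne i i₀ with rfl | h
        · rw [Pi.single_eq_same, if_pos rfl, hsg]
          split_ifs <;> simp
        · rw [Pi.single_eq_of_ne h, if_neg h, abs_zero]
      rw [Finset.sum_congr rfl fun i _ => habs i]
      simp
    · rw [pNormE_top', dotProduct_single]
      refine le_trans (ciSup_le hi₀) (le_of_eq ?_)
      by_cases h : 0 ≤ u i₀
      · rw [abs_of_nonneg h, hsg, if_pos h, mul_one]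
      · rw [abs_of_neg (lt_of_not_ge h), hsg, if_neg h, mul_neg_one]
  · -- 1 < p, q < ∞
    obtain ⟨⟨g, hg, hgv⟩, -⟩ :=
      NNReal.isGreatest_Lp (s := Finset.univ) (fun i : Fin m => Real.nnabs (u i)) hc.symm
    rw [Set.mem_setOf_eq] at hg
    refine ⟨fun i => (if 0 ≤ u i then 1 else -1) * (g i : ℝ), ?_, ?_⟩
    · rw [pNormE, if_neg hP]
      have habs : ∀ i, |(if 0 ≤ u i then (1:ℝ) else -1) * (g i : ℝ)| = (g i : ℝ) := by
        intro i
        rw [abs_mul]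
        split_ifs <;> simp
      have hsum : ∑ i, |(if 0 ≤ u i then (1:ℝ) else -1) * (g i : ℝ)| ^ p.toReal ≤ 1 := by
        have : ((∑ i, g i ^ p.toReal : NNReal) : ℝ) ≤ 1 := by exact_mod_cast hg
        rw [NNReal.coe_sum] at this
        refine le_trans (le_of_eq ?_) this
        refine Finset.sum_congr rfl fun i _ => ?_
        rw [habs i, NNReal.coe_rpow]
      exact Real.rpow_le_one (Finset.sum_nonneg fun i _ =>
        Real.rpow_nonneg (abs_nonneg _) _) hsum (by positivity)
    · rw [pNormE, if_neg hQ]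
      have h1 : u ⬝ᵥ (fun i => (if 0 ≤ u i then (1:ℝ) else -1) * (g i : ℝ))
          = ∑ i, |u i| * (g i : ℝ) := by
        refine Finset.sum_congr rfl fun i _ => ?_
        by_cases h : 0 ≤ u i
        · simp [h, abs_of_nonneg h]
        · simp [h, abs_of_neg (lt_of_not_ge h)]
      rw [h1]
      have hgv2 : (∑ i, Real.nnabs (u i) * g i : NNReal)
          = ((∑ i, Real.nnabs (u i) ^ q.toReal : NNReal)) ^ (1 / q.toReal) := hgv
      have h2 : ((∑ i, Real.nnabs (u i) * g i : NNReal) : ℝ)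
          = ((((∑ i, Real.nnabs (u i) ^ q.toReal : NNReal)) ^ (1 / q.toReal) : NNReal) : ℝ) :=
        congrArg (fun t : NNReal => (t : ℝ)) hgv2
      rw [NNReal.coe_sum] at h2
      refine le_of_eq ?_
      calc (∑ i, |u i| ^ q.toReal) ^ (1 / q.toReal)
          = ((((∑ i, Real.nnabs (u i) ^ q.toReal : NNReal)) ^ (1 / q.toReal) : NNReal) : ℝ) := by
            rw [NNReal.coe_rpow, NNReal.coe_sum]
            congr 1
        _ = ∑ i, |u i| * (g i : ℝ) := by
            rw [← h2]
            refine Finset.sum_congr rfl fun i _ => ?_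
            rw [NNReal.coe_mul, Real.coe_nnabs]

end helpers2

/-- Under the Slater condition `‖A⁻¹(μ − x̂)‖_p < √γ̄`, the support
function of `Z = {z : μ + Sz ∈ Y}` has the Lagrangian-dual representation
`sup_{z∈Z} ωᵀz = inf {(x̂ − μ)ᵀv + √γ̄‖Aᵀv‖_q : Sᵀv = ω}`. -/
theorem support_function_reduced_duality {n r : ℕ} (hr : 1 ≤ r) (hrn : r ≤ n)
    (A : Matrix (Fin n) (Fin n) ℝ) (hA : IsUnit A.det)
    (xhat μ : Fin n → ℝ) (γbar : ℝ) (hγbar : 0 < γbar)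
    (p q : ℝ≥0∞) (hp : 1 ≤ p) (hq : 1 ≤ q) (hpq : 1 / p + 1 / q = 1)
    (S : Matrix (Fin n) (Fin r) ℝ) (hS : S.rank = r)
    (hslater : pNormE p (A⁻¹.mulVec (μ - xhat)) < Real.sqrt γbar)
    (ω : Fin r → ℝ) :
    sSup ((fun z => ω ⬝ᵥ z) ''
        {z : Fin r → ℝ | μ + S.mulVec z ∈ coreSetE xhat A γbar p})
      = sInf {s : ℝ | ∃ v : Fin n → ℝ, Sᵀ.mulVec v = ω ∧
          s = (xhat - μ) ⬝ᵥ v + Real.sqrt γbar * pNormE q (Aᵀ.mulVec v)} := by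
  have hn : 0 < n := lt_of_lt_of_le hr hrn
  set γ : ℝ := Real.sqrt γbar with hγdef
  have hγ : 0 < γ := Real.sqrt_pos.mpr hγbar
  set c : Fin n → ℝ := A⁻¹ *ᵥ (xhat - μ) with hcdef
  set M : Matrix (Fin n) (Fin r) ℝ := A⁻¹ * S with hMdef
  have hAiA : A⁻¹ * A = 1 := nonsing_inv_mul A hA
  have hAAi : A * A⁻¹ = 1 := mul_nonsing_inv A hA
  have hc : pNormE p c < γ := by
    have h1 : A⁻¹ *ᵥ (μ - xhat) = -c := by
      rw [hcdef, ← Matrix.mulVec_neg, neg_sub]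
    rw [← pNormE_neg hp, ← h1]
    exact hslater
  -- the feasible set rewritten
  have hZ : ∀ z : Fin r → ℝ,
      (μ + S.mulVec z ∈ coreSetE xhat A γbar p) ↔ pNormE p (M *ᵥ z - c) ≤ γ := by
    intro z
    constructor
    · rintro ⟨ζ, hζ, heq⟩
      have h2 : M *ᵥ z - c = ζ := by
        have h3 : S *ᵥ z - (xhat - μ) = A *ᵥ ζ := by
          have := heq
          have h4 : S *ᵥ z = xhat + A *ᵥ ζ - μ := by
            rw [← heq]; abel
          rw [h4]; abel
        rw [hMdef, ← Matrix.mulVec_mulVec, hcdef, ← Matrix.mulVec_sub, h3,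
          Matrix.mulVec_mulVec, hAiA, Matrix.one_mulVec]
      rwa [h2]
    · intro hle
      refine ⟨M *ᵥ z - c, hle, ?_⟩
      have h3 : A *ᵥ (M *ᵥ z - c) = S *ᵥ z - (xhat - μ) := by
        rw [Matrix.mulVec_sub, hMdef, ← Matrix.mulVec_mulVec, Matrix.mulVec_mulVec, hAAi,
          Matrix.one_mulVec, hcdef, Matrix.mulVec_mulVec, hAAi, Matrix.one_mulVec]
      rw [h3]; abel
  -- surjectivity of Mᵀ
  have hMrank : Mᵀ.rank = r := by
    rw [Matrix.rank_transpose, hMdef,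
      Matrix.rank_mul_eq_right_of_isUnit_det A⁻¹ S (A.isUnit_nonsing_inv_det hA)]
    exact hS
  have hsurj : Function.Surjective Mᵀ.mulVecLin := by
    rw [← LinearMap.range_eq_top]
    apply Submodule.eq_top_of_finrank_eq
    rw [Matrix.rank] at hMrank
    rw [hMrank, Module.finrank_pi, Fintype.card_fin]
  obtain ⟨u₀, hu₀⟩ := hsurj ω
  rw [Matrix.mulVecLin_apply] at hu₀
  -- pairing identity
  have hpair : ∀ (u : Fin n → ℝ) (z : Fin r → ℝ), Mᵀ *ᵥ u = ω →
      ω ⬝ᵥ z = u ⬝ᵥ (M *ᵥ z) := by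
    intro u z h
    rw [← h, Matrix.mulVec_transpose, ← Matrix.dotProduct_mulVec]
  -- the dual set rewritten
  have hDset : {s : ℝ | ∃ v : Fin n → ℝ, Sᵀ.mulVec v = ω ∧
      s = (xhat - μ) ⬝ᵥ v + γ * pNormE q (Aᵀ.mulVec v)}
      = {s : ℝ | ∃ u : Fin n → ℝ, Mᵀ *ᵥ u = ω ∧ s = c ⬝ᵥ u + γ * pNormE q u} := by
    have hMT : Mᵀ = Sᵀ * A⁻¹ᵀ := by rw [hMdef, Matrix.transpose_mul]
    ext s
    constructor
    · rintro ⟨v, hv, rfl⟩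
      refine ⟨Aᵀ *ᵥ v, ?_, ?_⟩
      · rw [Matrix.mulVec_mulVec, hMT, Matrix.mul_assoc, ← Matrix.transpose_mul, hAAi,
          Matrix.transpose_one, Matrix.mul_one]
        exact hv
      · congr 1
        rw [Matrix.dotProduct_mulVec c, Matrix.vecMul_transpose, hcdef,
          Matrix.mulVec_mulVec, hAAi, Matrix.one_mulVec]
    · rintro ⟨u, hu, rfl⟩
      refine ⟨A⁻¹ᵀ *ᵥ u, ?_, ?_⟩
      · rw [Matrix.mulVec_mulVec, ← hMT, hu]
      · have hATv : Aᵀ *ᵥ (A⁻¹ᵀ *ᵥ u) = u := by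
          rw [Matrix.mulVec_mulVec, ← Matrix.transpose_mul, hAiA, Matrix.transpose_one,
            Matrix.one_mulVec]
        rw [hATv]
        congr 1
        rw [Matrix.dotProduct_mulVec, Matrix.vecMul_transpose, hcdef]
  rw [hDset]
  set Zset : Set (Fin r → ℝ) := {z : Fin r → ℝ | μ + S.mulVec z ∈ coreSetE xhat A γbar p}
    with hZsetdef
  set Simg : Set ℝ := (fun z => ω ⬝ᵥ z) '' Zset with hSimgdef
  set Dset : Set ℝ := {s : ℝ | ∃ u : Fin n → ℝ, Mᵀ *ᵥ u = ω ∧ s = c ⬝ᵥ u + γ * pNormE q u}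
    with hDsetdef
  -- weak duality
  have hweak : ∀ x ∈ Simg, ∀ s ∈ Dset, x ≤ s := by
    rintro x ⟨z, hz, rfl⟩ s ⟨u, hu, rfl⟩
    show ω ⬝ᵥ z ≤ c ⬝ᵥ u + γ * pNormE q u
    have hzb : pNormE p (M *ᵥ z - c) ≤ γ := (hZ z).mp hz
    have h1 : ω ⬝ᵥ z = u ⬝ᵥ c + (M *ᵥ z - c) ⬝ᵥ u := by
      rw [hpair u z hu, dotProduct_comm (M *ᵥ z - c) u, dotProduct_sub]
      ring
    rw [h1, dotProduct_comm u c]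
    have h2 : (M *ᵥ z - c) ⬝ᵥ u ≤ pNormE p (M *ᵥ z - c) * pNormE q u :=
      dotProduct_le_pNormE hp hq hpq _ u
    have h3 : pNormE p (M *ᵥ z - c) * pNormE q u ≤ γ * pNormE q u :=
      mul_le_mul_of_nonneg_right hzb (pNormE_nonneg hq u)
    linarith
  -- nonemptiness
  have h0Z : (0 : Fin r → ℝ) ∈ Zset := by
    rw [hZsetdef, Set.mem_setOf_eq, hZ 0]
    rw [Matrix.mulVec_zero, zero_sub, pNormE_neg hp]
    exact hc.le
  have hSne : Simg.Nonempty := ⟨ω ⬝ᵥ 0, 0, h0Z, rfl⟩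
  have hs₀ : c ⬝ᵥ u₀ + γ * pNormE q u₀ ∈ Dset := ⟨u₀, hu₀, rfl⟩
  have hDne : Dset.Nonempty := ⟨_, hs₀⟩
  have hSbdd : BddAbove Simg := ⟨c ⬝ᵥ u₀ + γ * pNormE q u₀, fun x hx => hweak x hx _ hs₀⟩
  have hDbdd : BddBelow Dset := ⟨ω ⬝ᵥ (0 : Fin r → ℝ), fun s hs => hweak _ ⟨0, h0Z, rfl⟩ s hs⟩
  refine le_antisymm (le_csInf hDne fun s hs => csSup_le hSne fun x hx => hweak x hx s hs) ?_
  -- strong duality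
  refine le_of_forall_pos_le_add fun δ hδ => ?_
  set α : ℝ := sSup Simg with hαdef
  -- the perturbation set K
  set B : Set (Fin n → ℝ) := {y | pNormE p y ≤ γ} with hBdef
  set Kv : Set ((Fin n → ℝ) × ℝ) :=
    {st | (∃ z : Fin r → ℝ, st.1 = M *ᵥ z) ∧ st.2 ≤ 0} with hKvdef
  set Kc : Set ((Fin n → ℝ) × ℝ) :=
    (fun y => (y + c, u₀ ⬝ᵥ (y + c))) '' B with hKcdef
  set K : Set ((Fin n → ℝ) × ℝ) := Kv + Kc with hKdef
  have hmemK : ∀ st : (Fin n → ℝ) × ℝ, st ∈ K ↔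
      ∃ a ∈ Kv, ∃ b ∈ Kc, a + b = st := fun st => Set.mem_add
  -- convexity of K
  have hKvconv : Convex ℝ Kv := by
    rintro st ⟨⟨z, hz⟩, h2⟩ st' ⟨⟨z', hz'⟩, h2'⟩ a b ha hb hab
    constructor
    · refine ⟨a • z + b • z', ?_⟩
      show a • st.1 + b • st'.1 = _
      rw [hz, hz', Matrix.mulVec_add, Matrix.mulVec_smul, Matrix.mulVec_smul]
    · show a • st.2 + b • st'.2 ≤ 0
      simp only [smul_eq_mul]
      nlinarith
  have hKcconv : Convex ℝ Kc := by
    rintro - ⟨y, hy, rfl⟩ - ⟨y', hy', rfl⟩ a b ha hb hab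
    refine ⟨a • y + b • y', convex_pball hp γ hy hy' ha hb hab, ?_⟩
    have h1 : a • y + b • y' + c = a • (y + c) + b • (y' + c) := by
      funext i
      simp only [Pi.add_apply, Pi.smul_apply, smul_eq_mul]
      have : a * c i + b * c i = c i := by rw [← add_mul, hab, one_mul]
      ring_nf
      linarith [this]
    apply Prod.ext
    · show a • y + b • y' + c = a • (y + c) + b • (y' + c)
      exact h1
    · show u₀ ⬝ᵥ (a • y + b • y' + c) = a • (u₀ ⬝ᵥ (y + c)) + b • (u₀ ⬝ᵥ (y' + c))
      rw [h1, dotProduct_add, dotProduct_smul, dotProduct_smul,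
        dotProduct_add]
  have hKconv : Convex ℝ K := hKvconv.add hKcconv
  -- closedness of K
  have hKvclosed : IsClosed Kv := by
    have h1 : Kv = (Prod.fst ⁻¹'
        ((LinearMap.range M.mulVecLin : Submodule ℝ (Fin n → ℝ)) : Set (Fin n → ℝ)))
        ∩ {st : (Fin n → ℝ) × ℝ | st.2 ≤ 0} := by
      ext st
      simp only [Set.mem_inter_iff, Set.mem_preimage, SetLike.mem_coe, LinearMap.mem_range,
        Matrix.mulVecLin_apply, Set.mem_setOf_eq, hKvdef]
      constructor
      · rintro ⟨⟨z, hz⟩, h2⟩; exact ⟨⟨z, hz.symm⟩, h2⟩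
      · rintro ⟨⟨z, hz⟩, h2⟩; exact ⟨⟨z, hz.symm⟩, h2⟩
    rw [h1]
    exact ((LinearMap.range M.mulVecLin).closed_of_finiteDimensional.preimage
      continuous_fst).inter (isClosed_le continuous_snd continuous_const)
  have hdotcont : Continuous fun x : Fin n → ℝ => u₀ ⬝ᵥ x := by
    show Continuous fun x : Fin n → ℝ => ∑ i, u₀ i * x i
    exact continuous_finset_sum _ fun i _ => continuous_const.mul (continuous_apply i)
  have hKccompact : IsCompact Kc := by
    apply (isCompact_pball hp γ).image
    exact (continuous_id.add continuous_const).prodMk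
      (hdotcont.comp (continuous_id.add continuous_const))
  have hKclosed : IsClosed K := by
    have h2 : K = Kv +ᵥ Kc := rfl
    rw [h2]
    exact IsClosed.vadd_right_of_isCompact hKvclosed hKccompact
  -- the point (0, α + δ) is not in K
  have hpt : ((0 : Fin n → ℝ), α + δ) ∉ K := by
    rw [hmemK]
    rintro ⟨a, ⟨⟨z', hz'⟩, ha2⟩, -, ⟨y, hy, rfl⟩, hsum⟩
    have h1 : a.1 + (y + c) = 0 := congrArg Prod.fst hsum
    have h2 : a.2 + u₀ ⬝ᵥ (y + c) = α + δ := congrArg Prod.snd hsum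
    have h3 : y + c = M *ᵥ (-z') := by
      rw [Matrix.mulVec_neg, ← hz']
      exact eq_neg_of_add_eq_zero_right h1
    have h4 : (-z') ∈ Zset := by
      rw [hZsetdef, Set.mem_setOf_eq, hZ]
      have : M *ᵥ (-z') - c = y := by rw [← h3]; abel
      rw [this]
      exact hy
    have h5 : ω ⬝ᵥ (-z') ≤ α := le_csSup hSbdd ⟨-z', h4, rfl⟩
    have h6 : u₀ ⬝ᵥ (y + c) = ω ⬝ᵥ (-z') := by
      rw [h3, hpair u₀ (-z') hu₀]
    linarith
  -- separation
  obtain ⟨f, u_, hfK, hfpt⟩ := geometric_hahn_banach_closed_point hKconv hKclosed hpt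
  have hsingle : ∀ v : Fin n → ℝ,
      (v, (0:ℝ)) = ∑ i, v i • ((Pi.single i 1 : Fin n → ℝ), (0:ℝ)) := by
    intro v
    apply Prod.ext
    · rw [Prod.fst_sum]
      simp only [Prod.smul_fst]
      have h0 : ∀ i : Fin n, v i • (Pi.single i (1:ℝ) : Fin n → ℝ) = Pi.single i (v i) := by
        intro i
        rw [← Pi.single_smul, smul_eq_mul, mul_one]
      rw [Finset.sum_congr rfl fun i _ => h0 i, Finset.univ_sum_single]
    · rw [Prod.snd_sum]
      simp
  have hfdec : ∀ st : (Fin n → ℝ) × ℝ,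
      f st = (fun i => f (Pi.single i 1, 0)) ⬝ᵥ st.1 + f (0, 1) * st.2 := by
    intro st
    have h1 : st = (st.1, (0:ℝ)) + st.2 • ((0:Fin n → ℝ), (1:ℝ)) := by
      apply Prod.ext <;> simp
    conv_lhs => rw [h1]
    rw [map_add, hsingle st.1, map_sum, f.map_smul]
    simp only [ContinuousLinearMap.map_smul, smul_eq_mul]
    simp only [dotProduct]
    congr 1
    · exact Finset.sum_congr rfl fun i _ => mul_comm _ _
    · exact mul_comm _ _
  set β : ℝ := f (0, 1) with hβdef
  set a : Fin n → ℝ := fun i => f (Pi.single i 1, 0) with hadef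
  -- feasible elements of K
  have hKc0 : ((0 : Fin n → ℝ), (0:ℝ)) ∈ Kc := by
    refine ⟨-c, ?_, ?_⟩
    · show pNormE p (-c) ≤ γ
      rw [pNormE_neg hp]; exact hc.le
    · apply Prod.ext <;> simp
  have hKelem1 : ∀ t : ℝ, ∀ z : Fin r → ℝ, (-(t • (M *ᵥ z)), (0:ℝ)) ∈ K := by
    intro t z
    rw [hmemK]
    refine ⟨(M *ᵥ (-(t • z)), 0), ⟨⟨-(t • z), rfl⟩, le_refl 0⟩, _, hKc0, ?_⟩
    apply Prod.ext
    · show M *ᵥ (-(t • z)) + 0 = -(t • (M *ᵥ z))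
      rw [add_zero, Matrix.mulVec_neg, Matrix.mulVec_smul]
    · show (0:ℝ) + 0 = 0
      ring
  have hKelem2 : ∀ θ : ℝ, 0 ≤ θ → (((0:Fin n → ℝ)), -θ) ∈ K := by
    intro θ hθ
    rw [hmemK]
    refine ⟨(0, -θ), ⟨⟨0, by rw [Matrix.mulVec_zero]⟩, by simpa using neg_nonpos.mpr hθ⟩, _, hKc0, ?_⟩
    apply Prod.ext <;> simp
  have hKelem3 : ∀ y : Fin n → ℝ, pNormE p y ≤ γ → (y + c, u₀ ⬝ᵥ (y + c)) ∈ K := by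
    intro y hy
    rw [hmemK]
    refine ⟨(0, 0), ⟨⟨0, by rw [Matrix.mulVec_zero]⟩, le_refl 0⟩, _, ⟨y, hy, rfl⟩, ?_⟩
    apply Prod.ext <;> simp
  -- positivity of the multiplier
  have hupos : 0 < u_ := by
    have h1 := hfK _ (hKelem2 0 le_rfl)
    rw [hfdec] at h1
    simpa using h1
  have hβnonneg : 0 ≤ β := by
    by_contra hβ
    push_neg at hβ
    have hθ : 0 ≤ (u_ + 1) / (-β) := div_nonneg (by linarith) (by linarith)
    have h1 := hfK _ (hKelem2 _ hθ)
    rw [hfdec] at h1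
    simp only [dotProduct_zero, zero_add] at h1
    have h2 : β * -((u_ + 1) / (-β)) = u_ + 1 := by
      rw [div_neg, neg_neg, mul_comm, div_mul_cancel₀ _ (ne_of_lt hβ)]
    rw [h2] at h1
    linarith
  have hβpos : 0 < β := by
    rcases eq_or_lt_of_le hβnonneg with h | h
    · exfalso
      have h1 := hfpt
      rw [hfdec] at h1
      simp only [dotProduct_zero, zero_add, ← h, zero_mul] at h1
      linarith
    · exact h
  -- a is orthogonal to the range of M
  have haMz : ∀ z : Fin r → ℝ, a ⬝ᵥ (M *ᵥ z) = 0 := by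
    intro z
    by_contra hd
    have h1 : ∀ t : ℝ, -(t * (a ⬝ᵥ (M *ᵥ z))) < u_ := by
      intro t
      have h2 := hfK _ (hKelem1 t z)
      rw [hfdec] at h2
      rw [dotProduct_neg, dotProduct_smul, smul_eq_mul, mul_zero, add_zero] at h2
      exact h2
    have h2 := h1 (-(u_ / (a ⬝ᵥ (M *ᵥ z))))
    rw [neg_mul, neg_neg, div_mul_cancel₀ _ hd] at h2
    exact lt_irrefl _ h2
  have haM : Mᵀ *ᵥ a = 0 := by
    funext j
    have h1 := haMz (Pi.single j 1)
    rw [Matrix.mulVec_single_one] at h1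
    have h2 : (Mᵀ *ᵥ a) j = Mᵀ j ⬝ᵥ a := rfl
    simp only [Pi.zero_apply]
    rw [h2, dotProduct_comm]
    exact h1
  -- the dual certificate
  set u : Fin n → ℝ := u₀ + β⁻¹ • a with hudef
  have huω : Mᵀ *ᵥ u = ω := by
    rw [hudef, Matrix.mulVec_add, Matrix.mulVec_smul, haM, smul_zero, add_zero, hu₀]
  have hbound : ∀ y : Fin n → ℝ, pNormE p y ≤ γ → u ⬝ᵥ (y + c) < α + δ := by
    intro y hy
    have h1 := hfK _ (hKelem3 y hy)
    rw [hfdec] at h1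
    have h2 : u_ < β * (α + δ) := by
      have h3 := hfpt
      rw [hfdec] at h3
      simpa using h3
    have h3 : u ⬝ᵥ (y + c) = u₀ ⬝ᵥ (y + c) + β⁻¹ * (a ⬝ᵥ (y + c)) := by
      rw [hudef, add_dotProduct, smul_dotProduct, smul_eq_mul]
    have hβ' : β ≠ 0 := ne_of_gt hβpos
    rw [h3, ← mul_lt_mul_iff_left₀ hβpos]
    calc (u₀ ⬝ᵥ (y + c) + β⁻¹ * (a ⬝ᵥ (y + c))) * β
        = a ⬝ᵥ (y + c) + β * (u₀ ⬝ᵥ (y + c)) := by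
          field_simp
          ring
      _ < u_ := h1
      _ < β * (α + δ) := h2
      _ = (α + δ) * β := mul_comm _ _
  obtain ⟨y₁, hy₁, hy₂⟩ := exists_dual_pNormE hn hp hq hpq u
  have hyy : pNormE p (γ • y₁) ≤ γ := by
    rw [pNormE_smul hp, abs_of_pos hγ]
    nlinarith
  have h5 := hbound (γ • y₁) hyy
  rw [dotProduct_add] at h5
  have h6 : γ * pNormE q u ≤ u ⬝ᵥ (γ • y₁) := by
    rw [dotProduct_smul, smul_eq_mul]
    exact mul_le_mul_of_nonneg_left hy₂ hγ.le
  have h7 : c ⬝ᵥ u + γ * pNormE q u ≤ α + δ := by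
    rw [dotProduct_comm]
    linarith
  exact (csInf_le hDbdd ⟨u, huω, rfl⟩).trans h7
end
end

section
/- Let d ≥ 1 and let g_1,…,g_m, h_1,…,h_m ∈ ℝ^d all be nonzero. Define Q = ½ Σ_{j=1}^m ( g_j g_jᵀ/‖g_j‖₂ + h_j h_jᵀ/‖h_j‖₂ ) and s = ½ Σ_{j=1}^m ( ‖g_j‖₂ + ‖h_j‖₂ ). Then for every index j₀ ∈ {1,…,m}, the (d+1)×(d+1) block matrices [Q, g_{j₀}/2; g_{j₀}ᵀ/2, s] and [Q, h_{j₀}/2; h_{j₀}ᵀ/2, s] are positive semidefinite. -/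
open Matrix MeasureTheory ENNReal

noncomputable section

lemma pNormE_two_pos {d : ℕ} (v : Fin d → ℝ) (hv : v ≠ 0) : 0 < pNormE 2 v := by
  rw [pNormE, if_neg (by simp)]
  apply Real.rpow_pos_of_pos
  obtain ⟨i, hi⟩ := Function.ne_iff.mp hv
  calc (0:ℝ) < |v i| ^ ((2:ℝ≥0∞).toReal) := Real.rpow_pos_of_pos (abs_pos.mpr hi) _
    _ ≤ _ := Finset.single_le_sum (f := fun j => |v j| ^ ((2:ℝ≥0∞).toReal))
        (fun j _ => Real.rpow_nonneg (abs_nonneg _) _) (Finset.mem_univ i)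

lemma quad_vecMulVec {d : ℕ} (v x : Fin d → ℝ) :
    x ⬝ᵥ (Matrix.vecMulVec v v *ᵥ x) = (v ⬝ᵥ x)^2 := by
  simp only [dotProduct, mulVec, vecMulVec_apply, sq, Finset.sum_mul, Finset.mul_sum]
  rw [Finset.sum_comm]
  exact Finset.sum_congr rfl fun i _ => Finset.sum_congr rfl fun j _ => by ring

lemma sum_mulVec' {d m : ℕ} (M : Fin m → Matrix (Fin d) (Fin d) ℝ) (x : Fin d → ℝ) :
    (∑ j, M j) *ᵥ x = ∑ j, M j *ᵥ x := by
  ext i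
  simp only [mulVec, dotProduct, Matrix.sum_apply, Finset.sum_mul, Finset.sum_apply]
  exact Finset.sum_comm

lemma dot_sum' {d m : ℕ} (x : Fin d → ℝ) (M : Fin m → Fin d → ℝ) :
    x ⬝ᵥ (∑ j, M j) = ∑ j, x ⬝ᵥ M j := by
  simp only [dotProduct, Finset.sum_apply, Finset.mul_sum]
  exact Finset.sum_comm

lemma blockMx_quad {d : ℕ} (Λ : Matrix (Fin d) (Fin d) ℝ) (β : Fin d → ℝ) (c : ℝ)
    (y : Fin d ⊕ Unit → ℝ) :
    y ⬝ᵥ (blockMx Λ β c *ᵥ y) =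
      (y ∘ Sum.inl) ⬝ᵥ (Λ *ᵥ (y ∘ Sum.inl)) + 2 * (β ⬝ᵥ (y ∘ Sum.inl)) * y (Sum.inr ())
        + c * (y (Sum.inr ()))^2 := by
  simp only [blockMx, dotProduct, mulVec, Fintype.sum_sum_type, fromBlocks_apply₁₁,
    fromBlocks_apply₁₂, fromBlocks_apply₂₁, fromBlocks_apply₂₂, Matrix.of_apply,
    Finset.univ_unique, Finset.sum_const, Finset.card_singleton, one_smul,
    Function.comp_apply, Finset.sum_singleton, Finset.mul_sum, Finset.sum_add_distrib]
  ring_nf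
  simp only [Finset.sum_add_distrib, Finset.mul_sum]
  ring_nf
  rw [Finset.sum_congr rfl (fun x _ => by ring :
    ∀ x ∈ Finset.univ, y (Sum.inr default) * β x * y (Sum.inl x) * 2
      = y (Sum.inr default) * β x * y (Sum.inl x) + y (Sum.inr default) * y (Sum.inl x) * β x),
    Finset.sum_add_distrib]
  ring

lemma aux_posSemidef {d m : ℕ} (a b : Fin m → ℝ) (v w : Fin m → Fin d → ℝ)
    (ha : ∀ j, 0 < a j) (hb : ∀ j, 0 < b j) (j₀ : Fin m) :
    (blockMx
        ((1 / 2 : ℝ) • ∑ j, ((a j)⁻¹ • Matrix.vecMulVec (v j) (v j)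
          + (b j)⁻¹ • Matrix.vecMulVec (w j) (w j)))
        ((1 / 2 : ℝ) • v j₀)
        ((1 / 2 : ℝ) * ∑ j, (a j + b j))).PosSemidef := by
  refine Matrix.PosSemidef.of_dotProduct_mulVec_nonneg ?_ ?_
  · show _ = _
    ext i j
    rcases i with i | i <;> rcases j with j | j <;>
      simp [blockMx, Matrix.conjTranspose_apply, Matrix.sum_apply, vecMulVec_apply, mul_comm]
  · intro y
    have hy : star y = y := rfl
    rw [hy, blockMx_quad]
    set x := y ∘ Sum.inl with hx
    set t := y (Sum.inr ()) with ht
    have hquad : x ⬝ᵥ (((1 / 2 : ℝ) • ∑ j, ((a j)⁻¹ • Matrix.vecMulVec (v j) (v j)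
          + (b j)⁻¹ • Matrix.vecMulVec (w j) (w j))) *ᵥ x)
        = (1/2 : ℝ) * ∑ j, ((a j)⁻¹ * (v j ⬝ᵥ x)^2 + (b j)⁻¹ * (w j ⬝ᵥ x)^2) := by
      rw [Matrix.smul_mulVec, dotProduct_smul, sum_mulVec', dot_sum']
      simp only [smul_eq_mul]
      congr 1
      apply Finset.sum_congr rfl
      intro j _
      rw [Matrix.add_mulVec, dotProduct_add, Matrix.smul_mulVec,
        Matrix.smul_mulVec, dotProduct_smul, dotProduct_smul,
        quad_vecMulVec, quad_vecMulVec]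
      simp [smul_eq_mul]
    rw [hquad]
    have hbeta : ((1 / 2 : ℝ) • v j₀) ⬝ᵥ x = (1/2) * (v j₀ ⬝ᵥ x) := by
      simp [dotProduct, Finset.mul_sum, mul_assoc]
    rw [hbeta]
    set A := v j₀ ⬝ᵥ x with hA
    have hS1 : (a j₀)⁻¹ * A^2 ≤ ∑ j, ((a j)⁻¹ * (v j ⬝ᵥ x)^2 + (b j)⁻¹ * (w j ⬝ᵥ x)^2) := by
      refine le_trans (le_add_of_nonneg_right
        (mul_nonneg (inv_nonneg.mpr (hb j₀).le) (sq_nonneg (w j₀ ⬝ᵥ x)))) ?_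
      exact Finset.single_le_sum
        (f := fun j => (a j)⁻¹ * (v j ⬝ᵥ x)^2 + (b j)⁻¹ * (w j ⬝ᵥ x)^2)
        (fun j _ => add_nonneg (mul_nonneg (inv_nonneg.mpr (ha j).le) (sq_nonneg _))
          (mul_nonneg (inv_nonneg.mpr (hb j).le) (sq_nonneg _))) (Finset.mem_univ j₀)
    have hS2 : a j₀ ≤ ∑ j, (a j + b j) := by
      refine le_trans (le_add_of_nonneg_right (hb j₀).le) ?_
      exact Finset.single_le_sum (f := fun j => a j + b j)
        (fun j _ => (add_pos (ha j) (hb j)).le) (Finset.mem_univ j₀)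
    have ha0 := ha j₀
    have hident : (1/2 : ℝ)*((a j₀)⁻¹ * A^2 + a j₀ * t^2) + A * t
        = (1/2) * (a j₀)⁻¹ * (A + a j₀*t)^2 := by
      field_simp
      ring
    have hfin : 0 ≤ (1/2 : ℝ)*((a j₀)⁻¹ * A^2 + a j₀ * t^2) + A * t := by
      rw [hident]; positivity
    have h3 : 0 ≤ ((∑ j, (a j + b j)) - a j₀) * t^2 :=
      mul_nonneg (sub_nonneg.mpr hS2) (sq_nonneg t)
    nlinarith [hS1, h3, hfin]

/-- With `Q = ½ Σ_j (g_j g_jᵀ/‖g_j‖₂ + h_j h_jᵀ/‖h_j‖₂)` and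
`s = ½ Σ_j (‖g_j‖₂ + ‖h_j‖₂)`, the block matrices `[Q, g_{j₀}/2; g_{j₀}ᵀ/2, s]`
and `[Q, h_{j₀}/2; h_{j₀}ᵀ/2, s]` are positive semidefinite. -/
theorem outer_product_block_posSemidef {d m : ℕ} (hd : 1 ≤ d)
    (g h : Fin m → Fin d → ℝ) (hg : ∀ j, g j ≠ 0) (hh : ∀ j, h j ≠ 0)
    (j₀ : Fin m) :
    (blockMx
        ((1 / 2 : ℝ) • ∑ j, ((pNormE 2 (g j))⁻¹ • Matrix.vecMulVec (g j) (g j)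
          + (pNormE 2 (h j))⁻¹ • Matrix.vecMulVec (h j) (h j)))
        ((1 / 2 : ℝ) • g j₀)
        ((1 / 2 : ℝ) * ∑ j, (pNormE 2 (g j) + pNormE 2 (h j)))).PosSemidef ∧
    (blockMx
        ((1 / 2 : ℝ) • ∑ j, ((pNormE 2 (g j))⁻¹ • Matrix.vecMulVec (g j) (g j)
          + (pNormE 2 (h j))⁻¹ • Matrix.vecMulVec (h j) (h j)))
        ((1 / 2 : ℝ) • h j₀)
        ((1 / 2 : ℝ) * ∑ j, (pNormE 2 (g j) + pNormE 2 (h j)))).PosSemidef := by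
  have hgp : ∀ j, 0 < pNormE 2 (g j) := fun j => pNormE_two_pos _ (hg j)
  have hhp : ∀ j, 0 < pNormE 2 (h j) := fun j => pNormE_two_pos _ (hh j)
  constructor
  · exact aux_posSemidef _ _ g h hgp hhp j₀
  · have e1 : (∑ j, ((pNormE 2 (g j))⁻¹ • Matrix.vecMulVec (g j) (g j)
          + (pNormE 2 (h j))⁻¹ • Matrix.vecMulVec (h j) (h j)))
        = ∑ j, ((pNormE 2 (h j))⁻¹ • Matrix.vecMulVec (h j) (h j)
          + (pNormE 2 (g j))⁻¹ • Matrix.vecMulVec (g j) (g j)) :=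
      Finset.sum_congr rfl fun j _ => add_comm _ _
    have e2 : (∑ j, (pNormE 2 (g j) + pNormE 2 (h j)))
        = ∑ j, (pNormE 2 (h j) + pNormE 2 (g j)) :=
      Finset.sum_congr rfl fun j _ => add_comm _ _
    rw [e1, e2]
    exact aux_posSemidef _ _ h g hhp hgp j₀
end
end
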